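/- arXiv:0705.0256 — 4 statements merged into one kernel-verified Lean document; each statement's English description precedes it below -/
import Mathlib

section
/- Let U be a compact Hausdorff topological group with normalized Haar (probability) measure du, and K a closed subgroup with normalized Haar measure dk. Let F : U → ℂ be a continuous class function (F(u x u⁻¹) = F(x) for all u, x ∈ U), and define f : U → ℂ by f(u) = ∫_K F(u k) dk. Let (π, V) be a continuous finite-dimensional irreducible unitary representation of U of dimension d, with character χ(u) = tr π(u), whose space of K-fixed vectors V^K is one-dimensional, and let v₁ ∈ V^K be a unit vector with associated spherical function ψ(u) = ⟨π(u)v₁, v₁⟩. Then d · ∫_U f(u) · conj(ψ(u)) du = ∫_U F(u) · conj(χ(u)) du; that is, the spherical Fourier coefficient of the K-average f, multiplied by d, equals the character Fourier coefficient of F. -/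
open MeasureTheory

/-- Let `F` be a continuous class function on a compact group `U`, and let
`f(u) = ∫_K F(u k) dk` be its `K`-average. Let `(π, V)` be a continuous finite-dimensional
irreducible unitary representation of `U` of dimension `d`, with character `χ` and with
one-dimensional space of `K`-fixed vectors spanned by the unit vector `v₁`; let
`ψ(u) = ⟨π(u)v₁, v₁⟩` be the associated spherical function. Then
`d ⋅ ∫_U f ψ̄ du = ∫_U F χ̄ du`.
(The inner product `⟨a, b⟩` of the statement is linear in the *first* variable, so it is
`inner b a` in Mathlib's convention, which is conjugate-linear in the first variable.) -/
theorem dim_mul_spherical_coefficient_eq_character_coefficient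
    {U : Type*} [Group U] [TopologicalSpace U] [IsTopologicalGroup U]
    [CompactSpace U] [T2Space U] [MeasurableSpace U] [BorelSpace U]
    (μ : Measure U) [μ.IsHaarMeasure] [IsProbabilityMeasure μ]
    (K : Subgroup U) (hK : IsClosed (K : Set U))
    (ν : Measure K) [ν.IsHaarMeasure] [IsProbabilityMeasure ν]
    (F : U → ℂ) (hFcont : Continuous F)
    (hFclass : ∀ u x : U, F (u * x * u⁻¹) = F x)
    {V : Type*} [NormedAddCommGroup V] [InnerProductSpace ℂ V] [FiniteDimensional ℂ V]
    (π : Representation ℂ U V)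
    (hcont : ∀ v : V, Continuous fun u : U => π u v)
    (hunitary : ∀ (u : U) (x y : V), (inner ℂ (π u x) (π u y) : ℂ) = inner ℂ x y)
    (hirred : ∀ T : Submodule ℂ V, (∀ u : U, T.map (π u) ≤ T) → T = ⊥ ∨ T = ⊤)
    (v₁ : V) (hv₁norm : ‖v₁‖ = 1)
    (hv₁fix : ∀ k : K, π (k : U) v₁ = v₁)
    (hspan : ∀ v : V, (∀ k : K, π (k : U) v = v) → ∃ c : ℂ, v = c • v₁) :
    (Module.finrank ℂ V : ℂ) *
        ∫ u : U, (∫ k : K, F (u * (k : U)) ∂ν) * (starRingEnd ℂ) (inner ℂ v₁ (π u v₁) : ℂ) ∂μ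
      = ∫ u : U, F u * (starRingEnd ℂ) (LinearMap.trace ℂ V (π u)) ∂μ := by
  classical
  -- the Haar probability measure on a compact group is also right invariant
  have hμright : μ.IsMulRightInvariant := by
    constructor
    intro g
    haveI : IsProbabilityMeasure (Measure.map (· * g) μ) :=
      Measure.isProbabilityMeasure_map (measurable_mul_const g).aemeasurable
    exact Measure.isHaarMeasure_eq_of_isProbabilityMeasure _ μ
  haveI := hμright
  haveI : CompactSpace K := isCompact_iff_compactSpace.mp hK.isCompact
  haveI : BorelSpace K := Subtype.borelSpace (K : Set U)
  -- basic facts about π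
  have hπinv : ∀ (u : U) (y : V), π u (π u⁻¹ y) = y := by
    intro u y
    have h : π u * π u⁻¹ = 1 := by rw [← map_mul, mul_inv_cancel, map_one]
    calc π u (π u⁻¹ y) = (π u * π u⁻¹) y := rfl
      _ = y := by rw [h]; rfl
  have hconj : ∀ (u : U) (x y : V),
      (inner ℂ x (π u⁻¹ y) : ℂ) = (starRingEnd ℂ) (inner ℂ y (π u x) : ℂ) := by
    intro u x y
    rw [← hunitary u x (π u⁻¹ y), hπinv, inner_conj_symm]
  set ψc : U → ℂ := fun u => (starRingEnd ℂ) (inner ℂ v₁ (π u v₁) : ℂ) with hψc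
  have hψcont : Continuous ψc :=
    continuous_star.comp (Continuous.inner continuous_const (hcont v₁))
  -- Step A : the K-average drops out
  have hAstep : ∫ u : U, (∫ k : K, F (u * (k : U)) ∂ν) * ψc u ∂μ
      = ∫ u : U, F u * ψc u ∂μ := by
    have hcont2 : Continuous (Function.uncurry fun (u : U) (k : K) => F (u * (k : U)) * ψc u) := by
      apply Continuous.mul
      · exact hFcont.comp (continuous_fst.mul (continuous_subtype_val.comp continuous_snd))
      · exact hψcont.comp continuous_fst
    calc ∫ u : U, (∫ k : K, F (u * (k : U)) ∂ν) * ψc u ∂μ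
        = ∫ u : U, ∫ k : K, F (u * (k : U)) * ψc u ∂ν ∂μ := by
          refine integral_congr_ae (Filter.Eventually.of_forall fun u => ?_)
          exact (integral_mul_const _ _).symm
      _ = ∫ k : K, ∫ u : U, F (u * (k : U)) * ψc u ∂μ ∂ν :=
          integral_integral_swap_of_hasCompactSupport hcont2
            (HasCompactSupport.of_compactSpace _)
      _ = ∫ k : K, ∫ u : U, F u * ψc u ∂μ ∂ν := by
          refine integral_congr_ae (Filter.Eventually.of_forall fun k => ?_)
          have hfix : π ((k : U))⁻¹ v₁ = v₁ := by
            have h := hv₁fix k⁻¹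
            rwa [Subgroup.coe_inv] at h
          have hψk : ∀ u : U, ψc (u * (k : U)⁻¹) = ψc u := by
            intro u
            simp only [hψc, map_mul, Module.End.mul_apply, hfix]
          calc ∫ u : U, F (u * (k : U)) * ψc u ∂μ
              = ∫ u : U, F (u * (k : U)) * ψc (u * (k : U) * (k : U)⁻¹) ∂μ := by
                simp only [mul_inv_cancel_right]
            _ = ∫ u : U, F u * ψc (u * (k : U)⁻¹) ∂μ :=
                integral_mul_right_eq_self (fun x => F x * ψc (x * (k : U)⁻¹)) (k : U)
            _ = ∫ u : U, F u * ψc u ∂μ := by simp only [hψk]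
      _ = ∫ u : U, F u * ψc u ∂μ := by simp
  -- Step B : the averaging operator A = ∫ F(u) π(u⁻¹) du
  let πc : U → (V →L[ℂ] V) := fun u => LinearMap.toContinuousLinearMap (π u)
  have hπcapp : ∀ (u : U) (v : V), πc u v = π u v := fun u v => rfl
  have hπccont : Continuous fun u : U => πc u⁻¹ :=
    continuous_clm_apply.mpr fun v => (hcont v).comp continuous_inv
  let Φ : U → (V →L[ℂ] V) := fun u => F u • πc u⁻¹
  have hΦcont : Continuous Φ := hFcont.smul hπccont
  have hΦint : Integrable Φ μ :=
    hΦcont.integrable_of_hasCompactSupport (HasCompactSupport.of_compactSpace _)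
  set A : V →L[ℂ] V := ∫ u : U, Φ u ∂μ with hA
  have hintv : ∀ v : V, Integrable (fun u : U => F u • π u⁻¹ v) μ := by
    intro v
    exact (hFcont.smul ((hcont v).comp continuous_inv)).integrable_of_hasCompactSupport
      (HasCompactSupport.of_compactSpace _)
  have hAapply : ∀ v : V, A v = ∫ u : U, F u • π u⁻¹ v ∂μ := by
    intro v
    rw [hA, ContinuousLinearMap.integral_apply hΦint]
    refine integral_congr_ae (Filter.Eventually.of_forall fun u => ?_)
    simp [Φ, πc]
  -- A commutes with the representation
  have hAconj : ∀ (g : U) (v : V), π g (A (π g⁻¹ v)) = A v := by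
    intro g v
    set h : U → V := fun x => F (g⁻¹ * x * g) • π x⁻¹ v with hh
    have e1 : ∀ u : U, πc g (F u • π u⁻¹ (π g⁻¹ v)) = h (g * u * g⁻¹) := by
      intro u
      have hg : π g (π u⁻¹ (π g⁻¹ v)) = π ((g * u * g⁻¹)⁻¹) v := by
        have hmul : π g * π u⁻¹ * π g⁻¹ = π ((g * u * g⁻¹)⁻¹) := by
          rw [← map_mul, ← map_mul]
          congr 1
          group
        calc π g (π u⁻¹ (π g⁻¹ v)) = (π g * π u⁻¹ * π g⁻¹) v := rfl
          _ = π ((g * u * g⁻¹)⁻¹) v := by rw [hmul]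
      have harg : g⁻¹ * (g * u * g⁻¹) * g = u := by group
      simp only [hh, harg]
      rw [(πc g).map_smul, hπcapp, hg]
    calc π g (A (π g⁻¹ v))
        = πc g (∫ u : U, F u • π u⁻¹ (π g⁻¹ v) ∂μ) := by rw [hAapply]; rfl
      _ = ∫ u : U, πc g (F u • π u⁻¹ (π g⁻¹ v)) ∂μ :=
          (ContinuousLinearMap.integral_comp_comm (πc g) (hintv _)).symm
      _ = ∫ u : U, h (g * u * g⁻¹) ∂μ := by
          refine integral_congr_ae (Filter.Eventually.of_forall fun u => ?_)
          exact e1 u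
      _ = ∫ u : U, h (u * g⁻¹) ∂μ := integral_mul_left_eq_self (fun x => h (x * g⁻¹)) g
      _ = ∫ u : U, h u ∂μ := integral_mul_right_eq_self h g⁻¹
      _ = ∫ u : U, F u • π u⁻¹ v ∂μ := by
          refine integral_congr_ae (Filter.Eventually.of_forall fun u => ?_)
          have hc := hFclass g⁻¹ u
          rw [inv_inv] at hc
          simp only [hh, hc]
      _ = A v := (hAapply v).symm
  have hAcomm : ∀ (g : U) (v : V), A (π g v) = π g (A v) := by
    intro g v
    have hgg : π g⁻¹ (π g v) = v := by
      have h0 := hπinv g⁻¹ v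
      rwa [inv_inv] at h0
    have h2 := hAconj g (π g v)
    rw [hgg] at h2
    exact h2.symm
  -- Schur's lemma : A is a scalar
  have hv₁ne : v₁ ≠ 0 := by
    intro h
    rw [h, norm_zero] at hv₁norm
    norm_num at hv₁norm
  haveI : Nontrivial V := nontrivial_of_ne v₁ 0 hv₁ne
  obtain ⟨c, hc⟩ := Module.End.exists_eigenvalue (A : V →ₗ[ℂ] V)
  have hTinv : ∀ u : U,
      (Module.End.eigenspace (A : V →ₗ[ℂ] V) c).map (π u) ≤
        Module.End.eigenspace (A : V →ₗ[ℂ] V) c := by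
    intro u x hx
    obtain ⟨y, hy, rfl⟩ := hx
    have hy' : A y = c • y := Module.End.mem_eigenspace_iff.mp hy
    refine Module.End.mem_eigenspace_iff.mpr ?_
    show A (π u y) = c • π u y
    rw [hAcomm u y, hy', (π u).map_smul]
  have hTtop : Module.End.eigenspace (A : V →ₗ[ℂ] V) c = ⊤ :=
    (hirred _ hTinv).resolve_left hc
  have hAeq : ∀ v : V, A v = c • v := by
    intro v
    have hv : v ∈ Module.End.eigenspace (A : V →ₗ[ℂ] V) c := hTtop ▸ Submodule.mem_top
    exact Module.End.mem_eigenspace_iff.mp hv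
  -- the spherical coefficient of F equals c
  have e3 : ∫ u : U, F u * ψc u ∂μ = (inner ℂ v₁ (A v₁) : ℂ) := by
    rw [hAapply, ← integral_inner (hintv v₁) v₁]
    refine integral_congr_ae (Filter.Eventually.of_forall fun u => ?_)
    show F u * ψc u = (inner ℂ v₁ (F u • (π u⁻¹) v₁) : ℂ)
    rw [inner_smul_right, hconj u v₁ v₁]
  have hv₁inner : (inner ℂ v₁ v₁ : ℂ) = 1 := by
    rw [inner_self_eq_norm_sq_to_K, hv₁norm]
    norm_num
  have e4 : (inner ℂ v₁ (A v₁) : ℂ) = c := by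
    rw [hAeq, inner_smul_right, hv₁inner, mul_one]
  -- trace of π(u⁻¹) is the conjugate character
  have htrconj : ∀ u : U,
      LinearMap.trace ℂ V (π u⁻¹) = (starRingEnd ℂ) (LinearMap.trace ℂ V (π u)) := by
    intro u
    set b := stdOrthonormalBasis ℂ V with hb
    have tr_eq : ∀ f : V →ₗ[ℂ] V,
        LinearMap.trace ℂ V f = ∑ i, (inner ℂ (b i) (f (b i)) : ℂ) := by
      intro f
      rw [LinearMap.trace_eq_matrix_trace ℂ b.toBasis, Matrix.trace]
      refine Finset.sum_congr rfl fun i _ => ?_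
      rw [Matrix.diag_apply, LinearMap.toMatrix_apply, b.coe_toBasis,
        b.coe_toBasis_repr_apply, b.repr_apply_apply]
    rw [tr_eq, tr_eq, map_sum]
    exact Finset.sum_congr rfl fun i _ => hconj u (b i) (b i)
  -- the trace of A equals the character coefficient of F
  let Tr : (V →L[ℂ] V) →L[ℂ] ℂ :=
    LinearMap.toContinuousLinearMap ((LinearMap.trace ℂ V).comp (ContinuousLinearMap.coeLM ℂ))
  have hTrapp : ∀ B : V →L[ℂ] V, Tr B = LinearMap.trace ℂ V (B : V →ₗ[ℂ] V) := fun B => rfl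
  have e5 : LinearMap.trace ℂ V ((A : V →L[ℂ] V) : V →ₗ[ℂ] V)
      = ∫ u : U, F u * (starRingEnd ℂ) (LinearMap.trace ℂ V (π u)) ∂μ := by
    rw [← hTrapp A, hA, ← ContinuousLinearMap.integral_comp_comm Tr hΦint]
    refine integral_congr_ae (Filter.Eventually.of_forall fun u => ?_)
    show Tr (Φ u) = F u * (starRingEnd ℂ) (LinearMap.trace ℂ V (π u))
    have h9 : (((F u • πc u⁻¹ : V →L[ℂ] V)) : V →ₗ[ℂ] V) = F u • (π u⁻¹ : V →ₗ[ℂ] V) := by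
      ext v
      simp [πc]
    show LinearMap.trace ℂ V (((F u • πc u⁻¹ : V →L[ℂ] V)) : V →ₗ[ℂ] V) = _
    rw [h9, _root_.map_smul, smul_eq_mul, htrconj]
  have e6 : LinearMap.trace ℂ V ((A : V →L[ℂ] V) : V →ₗ[ℂ] V)
      = c * (Module.finrank ℂ V : ℂ) := by
    have hAlin : ((A : V →L[ℂ] V) : V →ₗ[ℂ] V) = c • LinearMap.id := by
      ext v
      simp [hAeq v]
    rw [hAlin, _root_.map_smul, LinearMap.trace_id, smul_eq_mul]
  -- put everything together
  calc (Module.finrank ℂ V : ℂ) * ∫ u : U, (∫ k : K, F (u * (k : U)) ∂ν) * ψc u ∂μ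
      = (Module.finrank ℂ V : ℂ) * ∫ u : U, F u * ψc u ∂μ := by rw [hAstep]
    _ = (Module.finrank ℂ V : ℂ) * c := by rw [e3, e4]
    _ = c * (Module.finrank ℂ V : ℂ) := mul_comm _ _
    _ = ∫ u : U, F u * (starRingEnd ℂ) (LinearMap.trace ℂ V (π u)) ∂μ := by rw [← e6, e5]
end

section
/- Let 0 < r < π and let f : ℝ → ℂ be a smooth 2π-periodic function whose support is contained in [−r, r] + 2πℤ. Define f̂(λ) = (1/2π) ∫_{−π}^{π} f(t) e^{−iλt} dt for λ ∈ ℂ. Then f̂ is an entire function on ℂ, and for every k ∈ ℕ there exists a constant C_k > 0 such that |f̂(λ)| ≤ C_k (1+|λ|)^{−k} e^{r|Im λ|} for all λ ∈ ℂ. -/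
open scoped Real
open MeasureTheory Filter Metric Set

namespace LPWaux

lemma re_aux (x : ℂ) (t : ℝ) : (-Complex.I * x * (t : ℂ)).re = x.im * t := by
  simp [Complex.mul_re, Complex.mul_im]

lemma abs_E (lam : ℂ) (t : ℝ) :
    ‖Complex.exp (-Complex.I * lam * (t : ℂ))‖ = Real.exp (lam.im * t) := by
  rw [Complex.norm_exp, re_aux]

lemma contE (lam : ℂ) : Continuous fun t : ℝ => Complex.exp (-Complex.I * lam * (t : ℂ)) :=
  Complex.continuous_exp.comp (continuous_const.mul Complex.continuous_ofReal)

lemma hasDerivAt_t (lam : ℂ) (t : ℝ) :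
    HasDerivAt (fun s : ℝ => Complex.exp (-Complex.I * lam * (s : ℂ)))
      (-Complex.I * lam * Complex.exp (-Complex.I * lam * (t : ℂ))) t := by
  have h : HasDerivAt (fun s : ℝ => -Complex.I * lam * (s : ℂ)) (-Complex.I * lam) t := by
    simpa using ((Complex.ofRealCLM.hasDerivAt (x := t)).const_mul (-Complex.I * lam))
  simpa [mul_comm] using h.cexp

lemma hasDerivAt_lam (t : ℝ) (x : ℂ) :
    HasDerivAt (fun y : ℂ => Complex.exp (-Complex.I * y * (t : ℂ)))
      (-Complex.I * (t : ℂ) * Complex.exp (-Complex.I * x * (t : ℂ))) x := by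
  have h : HasDerivAt (fun y : ℂ => -Complex.I * y * (t : ℂ)) (-Complex.I * (t : ℂ)) x := by
    simpa using ((hasDerivAt_id x).const_mul (-Complex.I)).mul_const (t : ℂ)
  simpa [mul_comm] using h.cexp

/-- vanishing of all iterated derivatives on the gap -/
lemma vanish (r : ℝ) (hr0 : 0 < r) (f : ℝ → ℂ)
    (hsupp : ∀ t : ℝ, (∀ m : ℤ, r < |t - 2 * Real.pi * m|) → f t = 0)
    (k : ℕ) (t : ℝ)
    (ht : t ∈ Ioo r (2 * Real.pi - r) ∪ Ioo (-(2 * Real.pi - r)) (-r)) :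
    iteratedDeriv k f t = 0 := by
  have hπ := Real.pi_pos
  have hopen : IsOpen (Ioo r (2 * Real.pi - r) ∪ Ioo (-(2 * Real.pi - r)) (-r)) :=
    isOpen_Ioo.union isOpen_Ioo
  have hzero : ∀ s ∈ Ioo r (2 * Real.pi - r) ∪ Ioo (-(2 * Real.pi - r)) (-r), f s = 0 := by
    intro s hs
    apply hsupp
    intro m
    rcases hs with ⟨h1, h2⟩ | ⟨h1, h2⟩
    · rcases le_or_gt m 0 with hm | hm
      · have hm' : (m : ℝ) ≤ 0 := by exact_mod_cast hm
        rw [lt_abs]; left; nlinarith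
      · have hm' : (1 : ℝ) ≤ (m : ℝ) := by exact_mod_cast hm
        rw [lt_abs]; right; nlinarith
    · rcases le_or_gt 0 m with hm | hm
      · have hm' : (0 : ℝ) ≤ (m : ℝ) := by exact_mod_cast hm
        rw [lt_abs]; right; nlinarith
      · have hm'' : m ≤ -1 := by omega
        have hm' : (m : ℝ) ≤ -1 := by exact_mod_cast hm''
        rw [lt_abs]; left; nlinarith
  have hev : f =ᶠ[nhds t] fun _ => (0 : ℂ) :=
    Filter.eventuallyEq_of_mem (hopen.mem_nhds ht) hzero
  rw [hev.iteratedDeriv_eq k]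
  simp [iteratedDeriv]

end LPWaux

open LPWaux

/-- **Local Paley–Wiener theorem for the circle, forward direction.** If `f` is a smooth
`2π`-periodic function supported in `[-r, r] + 2πℤ` with `0 < r < π`, then its Fourier
transform `f̂(λ) = (1/2π)∫_{-π}^{π} f(t) e^{-iλt} dt` is entire and satisfies
`|f̂(λ)| ≤ C_k (1+|λ|)^{-k} e^{r|Im λ|}` for every `k`. -/
theorem local_paley_wiener_circle_forward
    (r : ℝ) (hr0 : 0 < r) (hrpi : r < Real.pi)
    (f : ℝ → ℂ) (hsmooth : ContDiff ℝ (⊤ : ℕ∞) f)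
    (hper : ∀ t : ℝ, f (t + 2 * Real.pi) = f t)
    (hsupp : ∀ t : ℝ, (∀ m : ℤ, r < |t - 2 * Real.pi * m|) → f t = 0) :
    Differentiable ℂ (fun lam : ℂ =>
      (1 / (2 * Real.pi) : ℂ) *
        ∫ t in (-Real.pi)..Real.pi, f t * Complex.exp (-Complex.I * lam * t)) ∧
    ∀ k : ℕ, ∃ C : ℝ, 0 < C ∧ ∀ lam : ℂ,
      ‖(1 / (2 * Real.pi) : ℂ) *
          ∫ t in (-Real.pi)..Real.pi, f t * Complex.exp (-Complex.I * lam * t)‖ ≤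
        C * (1 + ‖lam‖) ^ (-(k : ℤ)) * Real.exp (r * |lam.im|) := by
  have hπ := Real.pi_pos
  -- smoothness of iterated derivatives
  have hcd : ∀ k : ℕ, ContDiff ℝ (⊤ : ℕ∞) (iteratedDeriv k f) := by
    intro k
    rw [iteratedDeriv_eq_iterate]
    exact hsmooth.iterate_deriv k
  -- integration by parts, iterated
  have key : ∀ (k : ℕ) (lam : ℂ),
      (∫ t in (-Real.pi)..Real.pi, iteratedDeriv k f t * Complex.exp (-Complex.I * lam * t))
        = (Complex.I * lam) ^ k *
          ∫ t in (-Real.pi)..Real.pi, f t * Complex.exp (-Complex.I * lam * t) := by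
    intro k
    induction k with
    | zero => intro lam; simp
    | succ k ih =>
      intro lam
      set g := iteratedDeriv k f with hg
      have hgc : ContDiff ℝ (⊤ : ℕ∞) g := hcd k
      have hg'c : Continuous (deriv g) := (contDiff_infty_iff_deriv.mp hgc).2.continuous
      have hgpi : g Real.pi = 0 := by
        apply vanish r hr0 f hsupp
        exact Or.inl ⟨by linarith, by linarith⟩
      have hgmpi : g (-Real.pi) = 0 := by
        apply vanish r hr0 f hsupp
        exact Or.inr ⟨by linarith, by linarith⟩
      have hA : IntervalIntegrable (fun t : ℝ => deriv g t * Complex.exp (-Complex.I * lam * t))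
          volume (-Real.pi) Real.pi :=
        (hg'c.mul (contE lam)).intervalIntegrable _ _
      have hB : IntervalIntegrable
          (fun t : ℝ => g t * (-Complex.I * lam * Complex.exp (-Complex.I * lam * t)))
          volume (-Real.pi) Real.pi :=
        (hgc.continuous.mul (continuous_const.mul (contE lam))).intervalIntegrable _ _
      have heq : (∫ t in (-Real.pi)..Real.pi,
            (deriv g t * Complex.exp (-Complex.I * lam * t)
              + g t * (-Complex.I * lam * Complex.exp (-Complex.I * lam * t))))
          = g Real.pi * Complex.exp (-Complex.I * lam * Real.pi)
            - g (-Real.pi) * Complex.exp (-Complex.I * lam * (-Real.pi : ℝ)) := by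
        apply intervalIntegral.integral_eq_sub_of_hasDerivAt
          (f := fun t : ℝ => g t * Complex.exp (-Complex.I * lam * ↑t))
        · intro t _
          exact ((hgc.differentiable (by simp) t).hasDerivAt).mul (hasDerivAt_t lam t)
        · exact hA.add hB
      rw [hgpi, hgmpi, zero_mul, zero_mul, sub_zero] at heq
      rw [intervalIntegral.integral_add hA hB] at heq
      have hBval : (∫ t in (-Real.pi)..Real.pi,
            g t * (-Complex.I * lam * Complex.exp (-Complex.I * lam * t)))
          = (-Complex.I * lam) *
            ∫ t in (-Real.pi)..Real.pi, g t * Complex.exp (-Complex.I * lam * t) := by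
        rw [← intervalIntegral.integral_const_mul]
        apply intervalIntegral.integral_congr
        intro t _
        ring
      rw [hBval, ih lam] at heq
      have hstep : (∫ t in (-Real.pi)..Real.pi,
            iteratedDeriv (k + 1) f t * Complex.exp (-Complex.I * lam * t))
          = ∫ t in (-Real.pi)..Real.pi, deriv g t * Complex.exp (-Complex.I * lam * t) := by
        apply intervalIntegral.integral_congr
        intro t _
        rw [hg, ← iteratedDeriv_succ]
      rw [hstep]
      linear_combination heq
  -- uniform bound for each iterated derivative
  have bound : ∀ k : ℕ, ∃ M : ℝ, 0 ≤ M ∧ ∀ lam : ℂ,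
      ‖∫ t in (-Real.pi)..Real.pi,
          iteratedDeriv k f t * Complex.exp (-Complex.I * lam * t)‖
        ≤ M * Real.exp (r * |lam.im|) := by
    intro k
    obtain ⟨M0, hM0⟩ := isCompact_Icc.exists_bound_of_continuousOn
      (s := Icc (-Real.pi) Real.pi) ((hcd k).continuous.continuousOn)
    refine ⟨2 * Real.pi * max M0 0, by positivity, ?_⟩
    intro lam
    have hptw : ∀ t ∈ uIoc (-Real.pi) Real.pi,
        ‖iteratedDeriv k f t * Complex.exp (-Complex.I * lam * t)‖
          ≤ max M0 0 * Real.exp (r * |lam.im|) := by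
      intro t ht
      rw [uIoc_of_le (by linarith)] at ht
      obtain ⟨ht1, ht2⟩ := ht
      rcases le_or_gt |t| r with hcase | hcase
      · rw [norm_mul, abs_E]
        have h1 : ‖iteratedDeriv k f t‖ ≤ max M0 0 :=
          le_trans (hM0 t ⟨by linarith, ht2⟩) (le_max_left _ _)
        have h2 : Real.exp (lam.im * t) ≤ Real.exp (r * |lam.im|) := by
          apply Real.exp_le_exp.2
          calc lam.im * t ≤ |lam.im * t| := le_abs_self _
            _ = |lam.im| * |t| := abs_mul _ _
            _ ≤ |lam.im| * r := by
                exact mul_le_mul_of_nonneg_left hcase (abs_nonneg _)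
            _ = r * |lam.im| := mul_comm _ _
        exact mul_le_mul h1 h2 (Real.exp_pos _).le (le_max_right _ _)
      · have hz : iteratedDeriv k f t = 0 := by
          apply vanish r hr0 f hsupp
          rcases abs_cases t with ⟨he, _⟩ | ⟨he, _⟩
          · left; rw [he] at hcase; exact ⟨hcase, by linarith⟩
          · right; rw [he] at hcase
            exact ⟨by linarith, by linarith⟩
        rw [hz, zero_mul, norm_zero]
        positivity
    calc ‖∫ t in (-Real.pi)..Real.pi,
            iteratedDeriv k f t * Complex.exp (-Complex.I * lam * t)‖
        ≤ max M0 0 * Real.exp (r * |lam.im|) * |Real.pi - (-Real.pi)| := by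
          exact intervalIntegral.norm_integral_le_of_norm_le_const hptw
      _ = 2 * Real.pi * max M0 0 * Real.exp (r * |lam.im|) := by
          have habs2 : |Real.pi - -Real.pi| = 2 * Real.pi := by
            rw [abs_of_nonneg (by linarith : (0:ℝ) ≤ Real.pi - -Real.pi)]; ring
          rw [habs2]; ring
  constructor
  · -- differentiability
    apply Differentiable.const_mul
    intro x₀
    obtain ⟨M0, hM0⟩ := isCompact_Icc.exists_bound_of_continuousOn
      (s := Icc (-Real.pi) Real.pi) (hsmooth.continuous.continuousOn)
    have h := intervalIntegral.hasDerivAt_integral_of_dominated_loc_of_deriv_le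
      (𝕜 := ℂ) (μ := volume) (a := -Real.pi) (b := Real.pi)
      (F := fun x t => f t * Complex.exp (-Complex.I * x * t))
      (F' := fun x t => f t * (-Complex.I * (t : ℂ) * Complex.exp (-Complex.I * x * t)))
      (x₀ := x₀)
      (bound := fun _ => max M0 0 * (Real.pi * Real.exp ((‖x₀‖ + 1) * Real.pi)))
      (Metric.ball_mem_nhds x₀ one_pos)
      (Eventually.of_forall fun x =>
        ((hsmooth.continuous.mul (contE x)).aestronglyMeasurable))
      ((hsmooth.continuous.mul (contE x₀)).intervalIntegrable _ _)
      ((hsmooth.continuous.mul ((continuous_const.mul Complex.continuous_ofReal).mul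
        (contE x₀))).aestronglyMeasurable)
      ?_ ?_ ?_
    · exact h.2.differentiableAt
    · -- bound
      apply Eventually.of_forall
      intro t ht x hx
      rw [uIoc_of_le (by linarith)] at ht
      obtain ⟨ht1, ht2⟩ := ht
      have htabs : |t| ≤ Real.pi := abs_le.2 ⟨by linarith, ht2⟩
      have hxn : ‖x‖ ≤ ‖x₀‖ + 1 := by
        have := mem_ball_iff_norm.mp hx
        calc ‖x‖ = ‖x₀ + (x - x₀)‖ := by ring_nf
          _ ≤ ‖x₀‖ + ‖x - x₀‖ := norm_add_le _ _
          _ ≤ ‖x₀‖ + 1 := by linarith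
      rw [norm_mul, norm_mul, abs_E, norm_mul]
      have h1 : ‖f t‖ ≤ max M0 0 := le_trans (hM0 t ⟨by linarith, ht2⟩) (le_max_left _ _)
      have h2 : ‖(t : ℂ)‖ ≤ Real.pi := by rwa [Complex.norm_real, Real.norm_eq_abs]
      have h3 : Real.exp (x.im * t) ≤ Real.exp ((‖x₀‖ + 1) * Real.pi) := by
        apply Real.exp_le_exp.2
        calc x.im * t ≤ |x.im * t| := le_abs_self _
          _ = |x.im| * |t| := abs_mul _ _
          _ ≤ ‖x‖ * Real.pi := by
              apply mul_le_mul (Complex.abs_im_le_norm x) htabs (abs_nonneg _)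
                (norm_nonneg x)
          _ ≤ (‖x₀‖ + 1) * Real.pi := by
              exact mul_le_mul_of_nonneg_right hxn Real.pi_pos.le
      have h4 : ‖-Complex.I‖ = 1 := by simp
      calc ‖f t‖ * (‖-Complex.I‖ * ‖(t : ℂ)‖ * Real.exp (x.im * t))
          ≤ max M0 0 * (1 * Real.pi * Real.exp ((‖x₀‖ + 1) * Real.pi)) := by
            rw [h4]
            apply mul_le_mul h1 _ (by positivity) (le_max_right _ _)
            apply mul_le_mul _ h3 (Real.exp_pos _).le (by positivity)
            simpa using h2
        _ = max M0 0 * (Real.pi * Real.exp ((‖x₀‖ + 1) * Real.pi)) := by ring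
    · exact intervalIntegrable_const
    · apply Eventually.of_forall
      intro t _ x _
      exact (hasDerivAt_lam t x).const_mul (f t)
  · -- the estimates
    intro k
    obtain ⟨M0, hM0pos, hM0⟩ := bound 0
    obtain ⟨Mk, hMkpos, hMk⟩ := bound k
    refine ⟨2 ^ k * (M0 + Mk) / (2 * Real.pi) + 1, by positivity, ?_⟩
    intro lam
    set J := ‖∫ t in (-Real.pi)..Real.pi,
        f t * Complex.exp (-Complex.I * lam * t)‖ with hJ
    have hJ0 : J ≤ M0 * Real.exp (r * |lam.im|) := by
      have := hM0 lam
      rw [hJ]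
      simp only [iteratedDeriv_zero] at this
      exact this
    have hJk : ‖lam‖ ^ k * J ≤ Mk * Real.exp (r * |lam.im|) := by
      have := hMk lam
      rw [key k lam] at this
      rw [norm_mul, norm_pow, norm_mul, Complex.norm_I, one_mul] at this
      rw [hJ]
      exact this
    have hpow : (1 + ‖lam‖) ^ k ≤ 2 ^ k * (1 + ‖lam‖ ^ k) := by
      have habs : 0 ≤ ‖lam‖ := norm_nonneg _
      calc (1 + ‖lam‖) ^ k ≤ (2 * max 1 (‖lam‖)) ^ k := by
            apply pow_le_pow_left₀ (by linarith)
            rcases le_total (‖lam‖) 1 with h | h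
            · rw [max_eq_left h]; linarith
            · rw [max_eq_right h]; linarith
        _ = 2 ^ k * max 1 (‖lam‖) ^ k := mul_pow _ _ _
        _ ≤ 2 ^ k * (1 + ‖lam‖ ^ k) := by
            apply mul_le_mul_of_nonneg_left _ (by positivity)
            rcases le_total (‖lam‖) 1 with h | h
            · rw [max_eq_left h, one_pow]
              nlinarith [pow_nonneg habs k]
            · rw [max_eq_right h]
              nlinarith [pow_nonneg habs k]
    have hmain : (1 + ‖lam‖) ^ k * J ≤ 2 ^ k * (M0 + Mk) * Real.exp (r * |lam.im|) := by
      calc (1 + ‖lam‖) ^ k * J ≤ (2 ^ k * (1 + ‖lam‖ ^ k)) * J := by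
            apply mul_le_mul_of_nonneg_right hpow (norm_nonneg _)
        _ = 2 ^ k * (J + ‖lam‖ ^ k * J) := by ring
        _ ≤ 2 ^ k * (M0 * Real.exp (r * |lam.im|) + Mk * Real.exp (r * |lam.im|)) := by
            apply mul_le_mul_of_nonneg_left (add_le_add hJ0 hJk) (by positivity)
        _ = 2 ^ k * (M0 + Mk) * Real.exp (r * |lam.im|) := by ring
    have hBpos : (0 : ℝ) < (1 + ‖lam‖) ^ k := by positivity
    rw [norm_mul]
    have hconst : ‖(1 / (2 * Real.pi) : ℂ)‖ = 1 / (2 * Real.pi) := by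
      rw [show (1 / (2 * Real.pi) : ℂ) = ((1 / (2 * Real.pi) : ℝ) : ℂ) by push_cast; ring,
        Complex.norm_real, Real.norm_eq_abs, abs_of_pos (by positivity)]
    rw [hconst, zpow_neg, zpow_natCast]
    have hrw : (2 ^ k * (M0 + Mk) / (2 * Real.pi) + 1) * ((1 + ‖lam‖) ^ k)⁻¹ *
        Real.exp (r * |lam.im|)
        = ((2 ^ k * (M0 + Mk) / (2 * Real.pi) + 1) * Real.exp (r * |lam.im|)) /
            (1 + ‖lam‖) ^ k := by
      ring
    rw [hrw, le_div_iff₀ hBpos]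
    calc 1 / (2 * Real.pi) * J * (1 + ‖lam‖) ^ k
        = 1 / (2 * Real.pi) * ((1 + ‖lam‖) ^ k * J) := by ring
      _ ≤ 1 / (2 * Real.pi) * (2 ^ k * (M0 + Mk) * Real.exp (r * |lam.im|)) := by
          apply mul_le_mul_of_nonneg_left hmain (by positivity)
      _ = (2 ^ k * (M0 + Mk) / (2 * Real.pi)) * Real.exp (r * |lam.im|) := by ring
      _ ≤ (2 ^ k * (M0 + Mk) / (2 * Real.pi) + 1) * Real.exp (r * |lam.im|) := by
          nlinarith [Real.exp_pos (r * |lam.im|)]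
end

section
/- Let 0 < r < π and let g : ℂ → ℂ be an entire function such that for every k ∈ ℕ there exists a constant C_k > 0 with |g(λ)| ≤ C_k (1+|λ|)^{−k} e^{r|Im λ|} for all λ ∈ ℂ. Then there exists a unique smooth 2π-periodic function f : ℝ → ℂ with support contained in [−r, r] + 2πℤ such that f̂(n) = g(n) for all n ∈ ℤ, where f̂(n) = (1/2π) ∫_{−π}^{π} f(t) e^{−int} dt. -/
open MeasureTheory FourierTransform Filter Set Complex

private lemma pw_zpow_anti {u v : ℝ} (hu : 0 ≤ u) (huv : u ≤ v) (k : ℕ) :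
    (1 + v) ^ (-(k:ℤ)) ≤ (1 + u) ^ (-(k:ℤ)) := by
  have h1 : (0:ℝ) < 1 + u := by linarith
  rw [zpow_neg, zpow_neg, zpow_natCast, zpow_natCast]
  exact inv_anti₀ (pow_pos h1 k) (pow_le_pow_left₀ h1.le (by linarith) k)

private lemma pw_zpow_le_inv_sq (ξ : ℝ) : (1 + |ξ|) ^ (-((2:ℕ)):ℤ) ≤ (1 + ξ^2)⁻¹ := by
  have h1 : (0:ℝ) < 1 + ξ^2 := by positivity
  rw [zpow_neg, zpow_natCast]
  refine inv_anti₀ h1 ?_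
  nlinarith [abs_nonneg ξ, _root_.sq_abs ξ]

private lemma pw_fourier_vanish (r : ℝ) (hr0 : 0 < r)
    (g : ℂ → ℂ) (hg : Differentiable ℂ g) (C : ℝ)
    (hb : ∀ lam : ℂ, ‖g lam‖ ≤
      C * (1 + ‖lam‖) ^ (-((2:ℕ)):ℤ) * Real.exp (r * |lam.im|))
    (x : ℝ) (hx : r < 2 * Real.pi * |x|) :
    𝓕 (fun ξ : ℝ => g ξ) x = 0 := by
  have hC0 : 0 ≤ C := by
    have h := (norm_nonneg (g 0)).trans (hb 0)
    simp at h
    nlinarith [Real.exp_pos (r * |(0:ℂ).im|), zpow_pos (show (0:ℝ) < 1 + ‖(0:ℂ)‖ by simp) (-((2:ℕ)):ℤ)]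
  set F : ℂ → ℂ := fun z => g z * Complex.exp (-(((2 * Real.pi * x : ℝ)):ℂ) * z * Complex.I) with hFdef
  have hFdiff : Differentiable ℂ F :=
    hg.mul ((Complex.differentiable_exp).comp (((differentiable_id.const_mul _)).mul_const _))
  -- pointwise bound
  have hFb : ∀ a b : ℝ, ‖F (a + b * Complex.I)‖ ≤
      C * (1 + |a|) ^ (-((2:ℕ)):ℤ) * Real.exp (r * |b| + 2 * Real.pi * x * b) := by
    intro a b
    have him : (((a:ℂ) + b * Complex.I)).im = b := by simp
    have hre : (((a:ℂ) + b * Complex.I)).re = a := by simp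
    have h1 : (-(((2 * Real.pi * x : ℝ)):ℂ) * ((a:ℂ) + b * Complex.I) * Complex.I).re
        = 2 * Real.pi * x * b := by simp
    rw [hFdef]
    simp only [norm_mul, Complex.norm_exp, h1, Real.exp_add]
    have h2 : ‖g ((a:ℂ) + b * Complex.I)‖ ≤
        C * (1 + |a|) ^ (-((2:ℕ)):ℤ) * Real.exp (r * |b|) := by
      refine le_trans (hb _) ?_
      rw [him]
      have h3 : (1 + ‖(a:ℂ) + b * Complex.I‖) ^ (-((2:ℕ)):ℤ)
          ≤ (1 + |a|) ^ (-((2:ℕ)):ℤ) := by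
        refine pw_zpow_anti (abs_nonneg a) ?_ 2
        simpa [hre] using Complex.abs_re_le_norm ((a:ℂ) + b * Complex.I)
      exact mul_le_mul_of_nonneg_right (mul_le_mul_of_nonneg_left h3 hC0)
        (Real.exp_pos (r * |b|)).le
    have := Real.exp_pos (2 * Real.pi * x * b)
    calc ‖g ((a:ℂ) + b * Complex.I)‖ * Real.exp (2 * Real.pi * x * b)
        ≤ (C * (1 + |a|) ^ (-((2:ℕ)):ℤ) * Real.exp (r * |b|)) * Real.exp (2 * Real.pi * x * b) := by
          exact mul_le_mul_of_nonneg_right h2 this.le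
      _ = C * (1 + |a|) ^ (-((2:ℕ)):ℤ) * (Real.exp (r * |b|) * Real.exp (2 * Real.pi * x * b)) := by ring
  -- continuity
  have hFcont : Continuous F := hFdiff.continuous
  -- integrability on horizontal lines
  have hmaj : ∀ K : ℝ, Integrable (fun ξ : ℝ => C * Real.exp K * (1 + ξ^2)⁻¹) :=
    fun K => integrable_inv_one_add_sq.const_mul _
  have hFint : ∀ b : ℝ, Integrable (fun a : ℝ => F ((a:ℂ) + b * Complex.I)) := by
    intro b
    refine (hmaj (r * |b| + 2 * Real.pi * x * b)).mono'
      ((hFcont.comp (by continuity)).aestronglyMeasurable) ?_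
    filter_upwards with a
    refine (hFb a b).trans ?_
    have h4 := pw_zpow_le_inv_sq a
    have h5 : C * (1 + |a|) ^ (-((2:ℕ)):ℤ) * Real.exp (r * |b| + 2 * Real.pi * x * b)
        = (C * Real.exp (r * |b| + 2 * Real.pi * x * b)) * (1 + |a|) ^ (-((2:ℕ)):ℤ) := by ring
    rw [h5]
    exact mul_le_mul_of_nonneg_left h4 (mul_nonneg hC0 (Real.exp_pos _).le)
  have hrect : ∀ A σ : ℝ,
      (((∫ ξ : ℝ in -A..A, F ↑ξ) - ∫ ξ : ℝ in -A..A, F (↑ξ + ↑σ * Complex.I)) +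
        Complex.I * ∫ y : ℝ in (0:ℝ)..σ, F (↑A + ↑y * Complex.I)) -
        Complex.I * ∫ y : ℝ in (0:ℝ)..σ, F (-↑A + ↑y * Complex.I) = 0 := by
    intro A σ
    have h := Complex.integral_boundary_rect_eq_zero_of_differentiableOn F ((-A : ℝ):ℂ)
      ((A:ℂ) + (σ:ℝ) * Complex.I) hFdiff.differentiableOn
    simp only [Complex.ofReal_neg, Complex.neg_re, Complex.ofReal_re, Complex.neg_im,
      Complex.ofReal_im, Complex.add_re, Complex.mul_re, Complex.I_re, Complex.I_im,
      Complex.add_im, Complex.mul_im] at h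
    norm_num at h
    exact h
  -- vertical integrals tend to zero
  have hvert : ∀ (σ : ℝ) (c : ℝ → ℝ), (∀ A, |c A| = |A|) →
      Filter.Tendsto (fun A : ℝ => ∫ y : ℝ in (0:ℝ)..σ, F ((c A : ℂ) + ↑y * Complex.I))
        atTop (nhds 0) := by
    intro σ c hc
    have key : ∀ A : ℝ, ‖∫ y : ℝ in (0:ℝ)..σ, F ((c A : ℂ) + ↑y * Complex.I)‖ ≤
        (C * Real.exp ((r + 2 * Real.pi * |x|) * |σ|) * |σ - 0|) * ((1 + |A|)^2)⁻¹ := by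
      intro A
      have step : ∀ y ∈ Set.uIoc (0:ℝ) σ, ‖F ((c A : ℂ) + ↑y * Complex.I)‖ ≤
          C * Real.exp ((r + 2 * Real.pi * |x|) * |σ|) * ((1 + |A|)^2)⁻¹ := by
        intro y hy
        have hy' : |y| ≤ |σ| := by
          have h1 := hy.1
          have h2 := hy.2
          have h3 : -|σ| ≤ min 0 σ := le_min (neg_nonpos.mpr (abs_nonneg σ)) (neg_abs_le σ)
          have h4 : max 0 σ ≤ |σ| := max_le (abs_nonneg σ) (le_abs_self σ)
          rw [abs_le]
          constructor <;> [linarith [h3.trans h1.le]; linarith [h2.trans h4]]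
        refine (hFb (c A) y).trans ?_
        rw [hc A]
        have harg : r * |y| + 2 * Real.pi * x * y ≤ (r + 2 * Real.pi * |x|) * |σ| := by
          have h5 : 2 * Real.pi * x * y ≤ 2 * Real.pi * |x| * |σ| := by
            calc 2 * Real.pi * x * y ≤ |2 * Real.pi * x * y| := le_abs_self _
              _ = 2 * Real.pi * |x| * |y| := by
                  rw [abs_mul, abs_mul]
                  congr 2
                  rw [abs_mul]
                  simp [abs_of_pos Real.pi_pos]
              _ ≤ 2 * Real.pi * |x| * |σ| := by
                  have : (0:ℝ) ≤ 2 * Real.pi * |x| := by positivity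
                  nlinarith
          nlinarith [abs_nonneg y, abs_nonneg σ, hr0.le, mul_le_mul_of_nonneg_left hy' hr0.le]
        have hzp : ((1 + |A|):ℝ) ^ (-((2:ℕ)):ℤ) = ((1 + |A|)^2)⁻¹ := by
          rw [zpow_neg, zpow_natCast]
        rw [hzp]
        calc C * ((1 + |A|)^2)⁻¹ * Real.exp (r * |y| + 2 * Real.pi * x * y)
            ≤ C * ((1 + |A|)^2)⁻¹ * Real.exp ((r + 2 * Real.pi * |x|) * |σ|) := by
              refine mul_le_mul_of_nonneg_left (Real.exp_le_exp.mpr harg) ?_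
              positivity
          _ = C * Real.exp ((r + 2 * Real.pi * |x|) * |σ|) * ((1 + |A|)^2)⁻¹ := by ring
      calc ‖∫ y : ℝ in (0:ℝ)..σ, F ((c A : ℂ) + ↑y * Complex.I)‖
          ≤ (C * Real.exp ((r + 2 * Real.pi * |x|) * |σ|) * ((1 + |A|)^2)⁻¹) * |σ - 0| :=
            intervalIntegral.norm_integral_le_of_norm_le_const step
        _ = (C * Real.exp ((r + 2 * Real.pi * |x|) * |σ|) * |σ - 0|) * ((1 + |A|)^2)⁻¹ := by ring
    refine squeeze_zero_norm key ?_
    have h6 : Filter.Tendsto (fun A : ℝ => ((1 + |A|)^2)⁻¹) atTop (nhds 0) := by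
      apply Filter.Tendsto.inv_tendsto_atTop
      have h7 : Filter.Tendsto (fun A : ℝ => 1 + |A|) atTop atTop :=
        tendsto_atTop_add_const_left atTop 1 tendsto_abs_atTop_atTop
      exact (tendsto_pow_atTop (two_ne_zero)).comp h7
    simpa using h6.const_mul (C * Real.exp ((r + 2 * Real.pi * |x|) * |σ|) * |σ - 0|)
  -- horizontal integrals converge
  have hhor : ∀ b : ℝ, Filter.Tendsto (fun A : ℝ => ∫ ξ : ℝ in -A..A, F (↑ξ + ↑b * Complex.I))
      atTop (nhds (∫ ξ : ℝ, F (↑ξ + ↑b * Complex.I))) := fun b =>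
    intervalIntegral_tendsto_integral (hFint b) tendsto_neg_atTop_atBot tendsto_id
  have hFint0 : Integrable (fun ξ : ℝ => F ↑ξ) := by
    have := hFint 0
    simpa using this
  have hhor0 : Filter.Tendsto (fun A : ℝ => ∫ ξ : ℝ in -A..A, F ↑ξ)
      atTop (nhds (∫ ξ : ℝ, F ↑ξ)) :=
    intervalIntegral_tendsto_integral hFint0 tendsto_neg_atTop_atBot tendsto_id
  -- contour shift identity
  have hshift : ∀ σ : ℝ, (∫ ξ : ℝ, F (↑ξ + ↑σ * Complex.I)) = ∫ ξ : ℝ, F ↑ξ := by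
    intro σ
    have h1 : Filter.Tendsto (fun A : ℝ =>
        (((∫ ξ : ℝ in -A..A, F ↑ξ) - ∫ ξ : ℝ in -A..A, F (↑ξ + ↑σ * Complex.I)) +
          Complex.I * ∫ y : ℝ in (0:ℝ)..σ, F (↑A + ↑y * Complex.I)) -
          Complex.I * ∫ y : ℝ in (0:ℝ)..σ, F (-↑A + ↑y * Complex.I))
        atTop (nhds ((((∫ ξ : ℝ, F ↑ξ) - ∫ ξ : ℝ, F (↑ξ + ↑σ * Complex.I)) +
          Complex.I * 0) - Complex.I * 0)) := by
      have h1' := (((hhor0.sub (hhor σ)).add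
        ((hvert σ (fun A => A) (fun A => rfl)).const_mul Complex.I)).sub
        ((hvert σ (fun A => -A) (fun A => abs_neg A)).const_mul Complex.I))
      refine h1'.congr fun A => ?_
      push_cast
      rfl
    have h2 : Filter.Tendsto (fun _ : ℝ => (0:ℂ)) atTop
        (nhds ((((∫ ξ : ℝ, F ↑ξ) - ∫ ξ : ℝ, F (↑ξ + ↑σ * Complex.I)) +
          Complex.I * 0) - Complex.I * 0)) := by
      refine h1.congr fun A => ?_
      exact hrect A σ
    have h3 := tendsto_nhds_unique h2 tendsto_const_nhds
    simp only [mul_zero, add_zero, sub_zero] at h3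
    exact (sub_eq_zero.mp h3).symm
  -- bound for shifted integrals
  set B : ℝ := ∫ ξ : ℝ, (1 + ξ^2)⁻¹ with hB
  have hInorm : ∀ σ : ℝ, ‖∫ ξ : ℝ, F (↑ξ + ↑σ * Complex.I)‖ ≤
      C * Real.exp (r * |σ| + 2 * Real.pi * x * σ) * B := by
    intro σ
    have hbd : ∀ a : ℝ, ‖F (↑a + ↑σ * Complex.I)‖ ≤
        C * Real.exp (r * |σ| + 2 * Real.pi * x * σ) * (1 + a^2)⁻¹ := by
      intro a
      refine (hFb a σ).trans ?_
      have h4 := pw_zpow_le_inv_sq a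
      have h5 : C * (1 + |a|) ^ (-((2:ℕ)):ℤ) * Real.exp (r * |σ| + 2 * Real.pi * x * σ)
          = (C * Real.exp (r * |σ| + 2 * Real.pi * x * σ)) * (1 + |a|) ^ (-((2:ℕ)):ℤ) := by
        ring
      rw [h5]
      exact mul_le_mul_of_nonneg_left h4 (mul_nonneg hC0 (Real.exp_pos _).le)
    have h6 := MeasureTheory.norm_integral_le_of_norm_le
      (hmaj (r * |σ| + 2 * Real.pi * x * σ)) (Filter.Eventually.of_forall hbd)
    refine h6.trans (le_of_eq ?_)
    rw [MeasureTheory.integral_const_mul]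
  have hB0 : (0:ℝ) ≤ B := integral_nonneg fun ξ => by positivity
  have hxne : x ≠ 0 := by
    intro h
    rw [h] at hx
    simp at hx
    linarith
  have hkey : ∀ s : ℝ, 0 ≤ s → ‖∫ ξ : ℝ, F ↑ξ‖ ≤
      C * B * Real.exp (s * (r - 2 * Real.pi * |x|)) := by
    intro s hs
    rcases hxne.lt_or_gt with hneg | hpos
    · have h7 := hInorm s
      rw [hshift s] at h7
      refine h7.trans (le_of_eq ?_)
      rw [_root_.abs_of_nonneg hs, abs_of_neg hneg]
      ring_nf
    · have h7 := hInorm (-s)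
      rw [hshift (-s)] at h7
      refine h7.trans (le_of_eq ?_)
      rw [abs_neg, _root_.abs_of_nonneg hs, abs_of_pos hpos]
      ring_nf
  have hlim : Filter.Tendsto (fun s : ℝ => C * B * Real.exp (s * (r - 2 * Real.pi * |x|)))
      atTop (nhds 0) := by
    have hneg' : r - 2 * Real.pi * |x| < 0 := by linarith
    have h8 : Filter.Tendsto (fun s : ℝ => s * (r - 2 * Real.pi * |x|)) atTop atBot :=
      Filter.Tendsto.atTop_mul_const_of_neg hneg' Filter.tendsto_id
    have h9 := Real.tendsto_exp_atBot.comp h8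
    simpa using h9.const_mul (C * B)
  have h10 : ‖∫ ξ : ℝ, F ↑ξ‖ ≤ 0 :=
    ge_of_tendsto hlim (Filter.eventually_atTop.mpr ⟨0, fun s hs => hkey s hs⟩)
  have h11 : (∫ ξ : ℝ, F ↑ξ) = 0 := norm_le_zero_iff.mp h10
  rw [Real.fourier_eq']
  rw [← h11]
  refine MeasureTheory.integral_congr_ae (Filter.Eventually.of_forall fun v => ?_)
  show Complex.exp (↑(-2 * Real.pi * (inner ℝ v x : ℝ)) * Complex.I) • g ↑v = F ↑v
  rw [hFdef]
  have hin : (inner ℝ v x : ℝ) = v * x := by rw [RCLike.inner_apply', conj_trivial]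
  rw [smul_eq_mul, hin]
  push_cast
  ring_nf

private lemma pw_zpow_le_inv_sq' (ξ : ℝ) : (1 + |ξ|) ^ (-((2:ℕ)):ℤ) ≤ (1 + ξ^2)⁻¹ := by
  have h1 : (0:ℝ) < 1 + ξ^2 := by positivity
  rw [zpow_neg, zpow_natCast]
  refine inv_anti₀ h1 ?_
  nlinarith [abs_nonneg ξ, _root_.sq_abs ξ]

private lemma pw_decay_integrable (r C : ℝ) (hC0 : 0 ≤ C) (g : ℂ → ℂ)
    (hgc : Continuous g) (n : ℕ)
    (hb : ∀ lam : ℂ, ‖g lam‖ ≤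
      C * (1 + ‖lam‖) ^ (-((n + 2 : ℕ)):ℤ) * Real.exp (r * |lam.im|)) :
    Integrable (fun v : ℝ => ‖v‖ ^ n * ‖g (v:ℂ)‖) := by
  have hmaj : Integrable (fun v : ℝ => C * (1 + v^2)⁻¹) :=
    integrable_inv_one_add_sq.const_mul C
  refine hmaj.mono' ?_ ?_
  · have : Continuous (fun v : ℝ => ‖v‖ ^ n * ‖g (v:ℂ)‖) := by fun_prop
    exact this.aestronglyMeasurable
  · filter_upwards with v
    have h0 := hb (v:ℂ)
    rw [Complex.ofReal_im, abs_zero, mul_zero, Real.exp_zero, mul_one] at h0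
    rw [Complex.norm_real, Real.norm_eq_abs] at h0
    have hne : (1:ℝ) + |v| ≠ 0 := by positivity
    have e1 : ((1:ℝ) + |v|) ^ (n:ℤ) * (1 + |v|) ^ (-((n + 2 : ℕ)):ℤ)
        = (1 + |v|) ^ (-((2:ℕ)):ℤ) := by
      rw [← zpow_add₀ hne]
      congr 1
      push_cast
      ring
    have h2 : ‖v‖ ^ n ≤ (1 + |v|) ^ n := by
      rw [Real.norm_eq_abs]
      exact pow_le_pow_left₀ (abs_nonneg v) (by linarith) n
    have h3 : (0:ℝ) ≤ (1 + |v|) ^ (-((n + 2 : ℕ)):ℤ) :=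
      (zpow_pos (by positivity) _).le
    have h4 : ‖v‖ ^ n * ‖g (v:ℂ)‖ ≤ C * ((1 + |v|) ^ (-((2:ℕ)):ℤ)) := by
      calc ‖v‖ ^ n * ‖g (v:ℂ)‖
          ≤ (1 + |v|) ^ n * (C * (1 + |v|) ^ (-((n + 2 : ℕ)):ℤ)) := by
            refine mul_le_mul h2 h0 (norm_nonneg _) (by positivity)
        _ = C * ((1 + |v|) ^ (n:ℤ) * (1 + |v|) ^ (-((n + 2 : ℕ)):ℤ)) := by
            rw [zpow_natCast]; ring
        _ = C * ((1 + |v|) ^ (-((2:ℕ)):ℤ)) := by rw [e1]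
    have h5 : ‖‖v‖ ^ n * ‖g (v:ℂ)‖‖ = ‖v‖ ^ n * ‖g (v:ℂ)‖ := by
      rw [Real.norm_of_nonneg (by positivity)]
    rw [h5]
    exact h4.trans (mul_le_mul_of_nonneg_left (pw_zpow_le_inv_sq' v) hC0)

private lemma pw_summable (C : ℝ) (hC0 : 0 ≤ C) (g : ℂ → ℂ)
    (hb : ∀ n : ℤ, ‖g n‖ ≤ C * ((1 + |(n:ℝ)|)^2)⁻¹) :
    Summable fun n : ℤ => ‖g n‖ := by
  have hnat : Summable (fun k : ℕ => C * ((1 + (k:ℝ))^2)⁻¹) := by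
    have h1 : Summable (fun k : ℕ => 1 / ((k:ℝ) + 1) ^ 2) := by
      have := (summable_nat_add_iff (f := fun k : ℕ => 1 / (k:ℝ) ^ 2) 1).mpr
        (Real.summable_one_div_nat_pow.mpr one_lt_two)
      refine this.congr fun k => ?_
      push_cast
      ring_nf
    refine (h1.mul_left C).congr fun k => ?_
    rw [one_div]
    ring_nf
  have hmaj : Summable (fun n : ℤ => C * ((1 + |(n:ℝ)|)^2)⁻¹) := by
    refine Summable.of_nat_of_neg ?_ ?_
    · refine hnat.congr fun k => ?_
      norm_num
    · refine hnat.congr fun k => ?_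
      push_cast
      rw [abs_neg, _root_.abs_of_nonneg (by positivity : (0:ℝ) ≤ (k:ℝ))]
  exact Summable.of_nonneg_of_le (fun n => norm_nonneg _) hb hmaj

private lemma pw_repr (g : ℂ → ℂ)
    (hsum : Summable fun n : ℤ => ‖g n‖)
    (f : ℝ → ℂ) (hfc : Continuous f) (hper : ∀ t, f (t + 2 * Real.pi) = f t)
    (hcoef : ∀ n : ℤ, (1 / (2 * Real.pi) : ℂ) *
      ∫ t in (-Real.pi)..Real.pi, f t * Complex.exp (-Complex.I * n * t) = g n) :
    ∀ t : ℝ, f t = ∑' n : ℤ, g n • (fourier n) (t : AddCircle (2 * Real.pi)) := by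
  haveI : Fact (0 < 2 * Real.pi) := ⟨by positivity⟩
  have hp : Function.Periodic f (2 * Real.pi) := hper
  have hlc : Continuous hp.lift := by
    exact Continuous.quotient_liftOn' hfc _
  set F : C(AddCircle (2 * Real.pi), ℂ) := ⟨hp.lift, hlc⟩ with hFdef
  have hFcoe : ∀ x : ℝ, F (x : AddCircle (2 * Real.pi)) = f x := fun x => hp.lift_coe x
  have hFc : ∀ n : ℤ, fourierCoeff (F : AddCircle (2 * Real.pi) → ℂ) n = g n := by
    intro n
    rw [fourierCoeff_eq_intervalIntegral (F : AddCircle (2 * Real.pi) → ℂ) n (-Real.pi)]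
    have he : -Real.pi + 2 * Real.pi = Real.pi := by ring
    rw [he]
    have hint : ∀ x : ℝ, (fourier (-n) (x : AddCircle (2 * Real.pi)) : ℂ) • F (x : AddCircle (2 * Real.pi))
        = f x * Complex.exp (-Complex.I * n * x) := by
      intro x
      rw [smul_eq_mul, hFcoe, fourier_coe_apply, mul_comm]
      congr 2
      have hπ' : ((Real.pi : ℝ) : ℂ) ≠ 0 := by exact_mod_cast Real.pi_ne_zero
      push_cast
      field_simp
    rw [intervalIntegral.integral_congr (fun x _ => hint x)]
    rw [← hcoef n, Complex.real_smul]
    congr 1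
    push_cast
    norm_num
  intro t
  have hSum : Summable (fourierCoeff (F : AddCircle (2 * Real.pi) → ℂ)) := by
    refine Summable.of_norm ?_
    refine hsum.congr fun n => ?_
    rw [hFc n]
  have h1 := has_pointwise_sum_fourier_series_of_summable hSum (t : AddCircle (2 * Real.pi))
  have h2 := h1.tsum_eq
  rw [hFcoe] at h2
  rw [← h2]
  congr 1
  funext n
  rw [hFc n]



/-- **Local Paley–Wiener theorem for the circle, inverse direction.** Let `0 < r < π` and
let `g` be entire with `|g(λ)| ≤ C_k (1+|λ|)^{-k} e^{r|Im λ|}` for every `k`. Then there is a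
unique smooth `2π`-periodic function `f` supported in `[-r, r] + 2πℤ` whose Fourier
coefficients `f̂(n) = (1/2π)∫_{-π}^{π} f(t) e^{-int} dt` satisfy `f̂(n) = g(n)` for all
`n ∈ ℤ`. -/
theorem local_paley_wiener_circle_inverse
    (r : ℝ) (hr0 : 0 < r) (hrpi : r < Real.pi)
    (g : ℂ → ℂ) (hg : Differentiable ℂ g)
    (hdecay : ∀ k : ℕ, ∃ C : ℝ, 0 < C ∧ ∀ lam : ℂ,
      ‖g lam‖ ≤ C * (1 + ‖lam‖) ^ (-(k : ℤ)) * Real.exp (r * |lam.im|)) :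
    ∃! f : ℝ → ℂ,
      (ContDiff ℝ (⊤ : ℕ∞) f ∧
        (∀ t : ℝ, f (t + 2 * Real.pi) = f t) ∧
        (∀ t : ℝ, (∀ m : ℤ, r < |t - 2 * Real.pi * m|) → f t = 0)) ∧
      ∀ n : ℤ, (1 / (2 * Real.pi) : ℂ) *
          ∫ t in (-Real.pi)..Real.pi, f t * Complex.exp (-Complex.I * n * t) = g n := by
  have hπ : (0:ℝ) < Real.pi := Real.pi_pos
  have h2π : (0:ℝ) < 2 * Real.pi := by positivity
  set φ : ℝ → ℂ := fun ξ : ℝ => g ξ with hφ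
  have hφcont : Continuous φ := hg.continuous.comp Complex.continuous_ofReal
  have hint : ∀ n : ℕ, Integrable (fun v : ℝ => ‖v‖ ^ n * ‖φ v‖) := by
    intro n
    obtain ⟨C, hCpos, hC⟩ := hdecay (n + 2)
    exact pw_decay_integrable r C hCpos.le g hg.continuous n (by exact_mod_cast hC)
  set H : ℝ → ℂ := 𝓕 φ with hH
  have hHsmooth : ContDiff ℝ (⊤ : ℕ∞) H :=
    Real.contDiff_fourier (fun n _ => hint n)
  have hHcont : Continuous H := hHsmooth.continuous
  obtain ⟨C2, hC2pos, hC2⟩ := hdecay 2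
  have hHzero : ∀ u : ℝ, r < 2 * Real.pi * |u| → H u = 0 := fun u hu =>
    pw_fourier_vanish r hr0 g hg C2 (by exact_mod_cast hC2) u hu
  have hφint : Integrable φ := by
    have h0 := hint 0
    simp only [pow_zero, one_mul] at h0
    exact (integrable_norm_iff hφcont.aestronglyMeasurable).mp h0
  set c : ℝ := r / (2 * Real.pi) with hc
  have hc0 : 0 < c := by positivity
  have hc12 : c < 1/2 := by
    rw [hc, div_lt_iff₀ h2π]
    nlinarith
  have hHzero' : ∀ u : ℝ, c < |u| → H u = 0 := by
    intro u hu
    refine hHzero u ?_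
    calc r = 2 * Real.pi * c := by rw [hc]; field_simp
      _ < 2 * Real.pi * |u| := by exact (mul_lt_mul_iff_right₀ h2π).mpr hu
  have hHcs : HasCompactSupport H := by
    refine HasCompactSupport.intro (isCompact_Icc (a := -c) (b := c)) ?_
    intro u hu
    simp only [Set.mem_Icc, not_and_or, not_le] at hu
    refine hHzero' u ?_
    rcases hu with h | h
    · have : c < -u := by linarith
      exact this.trans_le (neg_le_abs u)
    · exact h.trans_le (le_abs_self u)
  have hHint : Integrable H := hHcont.integrable_of_hasCompactSupport hHcs
  have hinv : ∀ y : ℝ, 𝓕⁻ H y = φ y := by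
    have h6 := hφcont.fourierInv_fourier_eq hφint (by rwa [← hH] : Integrable (𝓕 φ))
    exact fun y => congrFun h6 y
  -- the candidate function
  set f : ℝ → ℂ := fun t => H ((round (t / (2 * Real.pi)) : ℝ) - t / (2 * Real.pi)) with hf
  -- periodicity
  have hfper : ∀ t : ℝ, f (t + 2 * Real.pi) = f t := by
    intro t
    have h1 : (t + 2 * Real.pi) / (2 * Real.pi) = t / (2 * Real.pi) + 1 := by
      field_simp
    show H _ = H _
    rw [h1, round_add_one]
    congr 1
    push_cast
    ring
  -- support property
  have hfsupp : ∀ t : ℝ, (∀ m : ℤ, r < |t - 2 * Real.pi * m|) → f t = 0 := by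
    intro t ht
    refine hHzero' _ ?_
    have h5 := ht (round (t / (2 * Real.pi)))
    have heq : |t - 2 * Real.pi * (round (t / (2 * Real.pi)) : ℝ)|
        = 2 * Real.pi * |((round (t / (2 * Real.pi)) : ℝ)) - t / (2 * Real.pi)| := by
      have h20 : t - 2 * Real.pi * (round (t / (2 * Real.pi)) : ℝ)
          = -(2 * Real.pi * ((round (t / (2 * Real.pi)) : ℝ) - t / (2 * Real.pi))) := by
        field_simp
        ring
      rw [h20, abs_neg, abs_mul, _root_.abs_of_pos h2π]
    rw [heq] at h5
    rw [hc, div_lt_iff₀ h2π]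
    linarith
  -- smoothness
  have hfsmooth : ContDiff ℝ (⊤ : ℕ∞) f := by
    rw [contDiff_iff_contDiffAt]
    intro t₀
    set x₀ : ℝ := t₀ / (2 * Real.pi) with hx₀
    have hcont : ContinuousAt (fun t : ℝ => t / (2 * Real.pi)) t₀ :=
      (continuous_id.div_const _).continuousAt
    by_cases hhalf : ∃ m : ℤ, x₀ + 1/2 = m
    · -- near a half-integer multiple: f vanishes in a neighborhood
      obtain ⟨m, hm⟩ := hhalf
      set δ : ℝ := (1/2 - c)/2 with hδ
      have hδ0 : 0 < δ := by rw [hδ]; linarith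
      have hball : ∀ᶠ y in nhds x₀, |y - x₀| < δ := by
        filter_upwards [Metric.ball_mem_nhds x₀ hδ0] with y hy
        simpa [Real.dist_eq] using hy
      have hnear : ∀ᶠ t in nhds t₀, |t / (2 * Real.pi) - x₀| < δ := hcont.eventually hball
      have hev : ∀ᶠ t in nhds t₀, f t = 0 := by
        filter_upwards [hnear] with t htc
        refine hHzero' _ ?_
        have key : (1:ℝ)/2 - δ ≤ |((round (t / (2 * Real.pi)) : ℝ)) - t / (2 * Real.pi)| := by
          set x : ℝ := t / (2 * Real.pi)
          set k : ℤ := round x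
          have h3 : (1:ℝ)/2 ≤ |(k:ℝ) - x₀| := by
            have hx0 : x₀ = (m:ℝ) - 1/2 := by linarith
            rw [hx0]
            have h4 : (k:ℝ) - ((m:ℝ) - 1/2) = ((k - m : ℤ):ℝ) + 1/2 := by push_cast; ring
            rw [h4]
            rcases le_or_gt 0 ((k - m : ℤ):ℝ) with h | h
            · rw [_root_.abs_of_nonneg (by linarith)]; linarith
            · have h5 : (k - m : ℤ) < 0 := by exact_mod_cast h
              have h5' : (k - m : ℤ) ≤ -1 := by omega
              have h6 : ((k - m : ℤ):ℝ) ≤ -1 := by exact_mod_cast h5'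
              rw [_root_.abs_of_nonpos (by linarith)]; linarith
          have h7 := abs_sub_le ((k:ℝ)) x x₀
          have h8 := abs_sub_comm ((k:ℝ)) x
          have h9 := abs_sub_le ((k:ℝ)) x₀ x
          have h10 := abs_sub_comm x x₀
          calc (1:ℝ)/2 - δ ≤ |(k:ℝ) - x₀| - |x - x₀| := by linarith
            _ ≤ |(k:ℝ) - x| := by linarith [abs_sub_le ((k:ℝ)) x x₀]
        linarith
      exact contDiffAt_const.congr_of_eventuallyEq hev
    · -- round is locally constant
      push_neg at hhalf
      set m : ℤ := round x₀ with hm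
      have hfl : (m:ℝ) ≤ x₀ + 1/2 ∧ x₀ + 1/2 < (m:ℝ) + 1 := by
        rw [hm, round_eq]
        constructor
        · exact_mod_cast Int.floor_le (x₀ + 1/2)
        · exact_mod_cast Int.lt_floor_add_one (x₀ + 1/2)
      have hlstrict : (m:ℝ) < x₀ + 1/2 := by
        rcases eq_or_lt_of_le hfl.1 with h | h
        · exact absurd h.symm (by intro hcontra; exact hhalf m hcontra)
        · exact h
      set ε : ℝ := min (x₀ + 1/2 - m) ((m:ℝ) + 1 - (x₀ + 1/2)) with hε
      have hε0 : 0 < ε := lt_min (by linarith) (by linarith)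
      have hball : ∀ᶠ y in nhds x₀, |y - x₀| < ε := by
        filter_upwards [Metric.ball_mem_nhds x₀ hε0] with y hy
        simpa [Real.dist_eq] using hy
      have hnear : ∀ᶠ t in nhds t₀, |t / (2 * Real.pi) - x₀| < ε := hcont.eventually hball
      have hev : ∀ᶠ t in nhds t₀, f t = H ((m:ℝ) - t / (2 * Real.pi)) := by
        filter_upwards [hnear] with t htc
        have hround : round (t / (2 * Real.pi)) = m := by
          rw [round_eq]
          refine Int.floor_eq_iff.mpr ⟨?_, ?_⟩
          · have := abs_lt.mp htc
            have h11 : x₀ + 1/2 - m ≥ ε := min_le_left _ _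
            push_cast
            linarith [this.1]
          · have := abs_lt.mp htc
            have h12 : (m:ℝ) + 1 - (x₀ + 1/2) ≥ ε := min_le_right _ _
            push_cast
            linarith [this.2]
        show H _ = H _
        rw [hround]
      have hsm : ContDiff ℝ (⊤ : ℕ∞) (fun t : ℝ => H ((m:ℝ) - t / (2 * Real.pi))) :=
        hHsmooth.comp (contDiff_const.sub (contDiff_id.div_const _))
      exact hsm.contDiffAt.congr_of_eventuallyEq hev
  -- Fourier coefficients
  have hfcoef : ∀ n : ℤ, (1 / (2 * Real.pi) : ℂ) *
      ∫ t in (-Real.pi)..Real.pi, f t * Complex.exp (-Complex.I * n * t) = g n := by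
    intro n
    have hπc : ((Real.pi : ℝ) : ℂ) ≠ 0 := Complex.ofReal_ne_zero.mpr Real.pi_ne_zero
    set G : ℝ → ℂ := fun u => H u * Complex.exp (((2 * Real.pi * n * u : ℝ) : ℂ) * Complex.I)
      with hG
    have hGzero : ∀ u : ℝ, c < |u| → G u = 0 := by
      intro u hu
      show H u * _ = 0
      rw [hHzero' u hu, zero_mul]
    have hhalfzero : ∀ u : ℝ, (1:ℝ)/2 ≤ |u| → G u = 0 := fun u hu =>
      hGzero u (lt_of_lt_of_le hc12 hu)
    have hstep1 : ∀ t ∈ Set.uIcc (-Real.pi) Real.pi,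
        f t * Complex.exp (-Complex.I * n * t) = G (-(2 * Real.pi)⁻¹ * t) := by
      intro t ht
      rw [Set.uIcc_of_le (by linarith)] at ht
      obtain ⟨ht1, ht2⟩ := ht
      by_cases hT : t = Real.pi
      · subst hT
        have e1 : Real.pi / (2 * Real.pi) = 1/2 := by
          field_simp
        have e3 : ((round (Real.pi / (2 * Real.pi)) : ℤ) : ℝ) - Real.pi / (2 * Real.pi)
            = 1/2 := by
          rw [e1]
          norm_num [round_eq]
        have e2 : f Real.pi = 0 := by
          show H _ = 0
          rw [e3]
          refine hHzero' _ ?_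
          rw [abs_of_pos (by norm_num : (0:ℝ) < 1/2)]
          exact hc12
        have e4 : G (-(2 * Real.pi)⁻¹ * Real.pi) = 0 := by
          refine hhalfzero _ ?_
          have e5 : -(2 * Real.pi)⁻¹ * Real.pi = -(1/2) := by
            field_simp
          rw [e5, abs_neg, abs_of_pos (by norm_num : (0:ℝ) < 1/2)]
        rw [e2, e4, zero_mul]
      · have htlt : t < Real.pi := lt_of_le_of_ne ht2 hT
        have hxl : -(1:ℝ)/2 ≤ t / (2 * Real.pi) := by
          rw [le_div_iff₀ h2π]
          nlinarith
        have hxu : t / (2 * Real.pi) < 1/2 := by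
          rw [div_lt_iff₀ h2π]
          nlinarith
        have hround : round (t / (2 * Real.pi)) = 0 := by
          rw [round_eq, Int.floor_eq_zero_iff, Set.mem_Ico]
          constructor
          · linarith
          · linarith
        show H _ * _ = _
        rw [hround]
        have e6 : ((0:ℤ):ℝ) - t / (2 * Real.pi) = -(2 * Real.pi)⁻¹ * t := by
          push_cast
          ring
        rw [e6]
        congr 2
        have e7 : (2 * Real.pi * n * (-(2 * Real.pi)⁻¹ * t) : ℝ) = -(n * t) := by
          field_simp
        rw [e7]
        push_cast
        ring
    have hstep2 : (∫ t in (-Real.pi)..Real.pi, f t * Complex.exp (-Complex.I * n * t))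
        = ∫ t in (-Real.pi)..Real.pi, G (-(2 * Real.pi)⁻¹ * t) :=
      intervalIntegral.integral_congr hstep1
    have hne : (-(2 * Real.pi)⁻¹ : ℝ) ≠ 0 := neg_ne_zero.mpr (inv_ne_zero (by positivity))
    have hstep3 := intervalIntegral.integral_comp_mul_left G
      (a := -Real.pi) (b := Real.pi) hne
    have he1 : -(2 * Real.pi)⁻¹ * -Real.pi = 1/2 := by field_simp
    have he2 : -(2 * Real.pi)⁻¹ * Real.pi = -(1/2) := by field_simp
    have he3 : ((-(2 * Real.pi)⁻¹ : ℝ))⁻¹ = -(2 * Real.pi) := by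
      rw [inv_neg, inv_inv]
    rw [he1, he2, he3] at hstep3
    have hstep4 : (∫ u in (1/2 : ℝ)..(-(1/2) : ℝ), G u)
        = -∫ u in (-(1/2) : ℝ)..(1/2 : ℝ), G u := intervalIntegral.integral_symm _ _
    have hGcont : Continuous G := by
      have hcc : Continuous fun u : ℝ => 2 * Real.pi * ((n:ℤ):ℝ) * u :=
        continuous_const.mul continuous_id
      exact hHcont.mul (Complex.continuous_exp.comp
        ((Complex.continuous_ofReal.comp hcc).mul continuous_const))
    have hGcs : HasCompactSupport G := hHcs.mul_right
    have hGint : Integrable G := hGcont.integrable_of_hasCompactSupport hGcs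
    have hstep5 : (∫ u in (-(1/2) : ℝ)..(1/2 : ℝ), G u) = ∫ u : ℝ, G u := by
      rw [intervalIntegral.integral_of_le (by norm_num)]
      refine MeasureTheory.setIntegral_eq_integral_of_forall_compl_eq_zero ?_
      intro u hu
      simp only [Set.mem_Ioc, not_and_or, not_lt, not_le] at hu
      refine hhalfzero u ?_
      rcases hu with h | h
      · have : (1:ℝ)/2 ≤ -u := by linarith
        exact this.trans (neg_le_abs u)
      · exact (by linarith : (1:ℝ)/2 ≤ u).trans (le_abs_self u)
    have hstep6 : (∫ u : ℝ, G u) = g n := by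
      have h7 := hinv (n : ℝ)
      rw [Real.fourierInv_eq'] at h7
      have h8 : (∫ v : ℝ, Complex.exp (((2 * Real.pi * (inner ℝ v ((n:ℤ):ℝ) : ℝ) : ℝ) : ℂ)
          * Complex.I) • H v) = ∫ u : ℝ, G u := by
        refine MeasureTheory.integral_congr_ae (Filter.Eventually.of_forall fun v => ?_)
        show Complex.exp _ • H v = H v * Complex.exp _
        rw [smul_eq_mul, mul_comm]
        congr 2
        have : (inner ℝ v ((n:ℤ):ℝ) : ℝ) = v * ((n:ℤ):ℝ) := by rw [RCLike.inner_apply', conj_trivial]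
        rw [this]
        push_cast
        ring
      rw [h8] at h7
      rw [h7]
      show g (((n:ℤ):ℝ):ℂ) = g ((n:ℤ):ℂ)
      norm_cast
    rw [hstep2, hstep3, hstep4, hstep5, hstep6]
    rw [smul_neg, Complex.real_smul]
    push_cast
    field_simp
  -- summability of the coefficients
  have hgsum : Summable fun n : ℤ => ‖g n‖ := by
    refine pw_summable C2 hC2pos.le g ?_
    intro n
    have h13 := hC2 (n : ℂ)
    have h14 : ((n:ℂ)).im = 0 := by simp
    have h15 : ‖((n:ℤ):ℂ)‖ = |(n:ℝ)| := by
      rw [show ((n:ℤ):ℂ) = ((n:ℝ):ℂ) by push_cast; rfl, Complex.norm_real, Real.norm_eq_abs]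
    rw [h14, abs_zero, mul_zero, Real.exp_zero, mul_one, h15] at h13
    refine h13.trans (le_of_eq ?_)
    rw [zpow_neg]
    norm_num
  -- conclusion
  refine ⟨f, ⟨⟨hfsmooth, hfper, hfsupp⟩, hfcoef⟩, ?_⟩
  intro f' hf'
  have h1 := pw_repr g hgsum f' hf'.1.1.continuous hf'.1.2.1 hf'.2
  have h2 := pw_repr g hgsum f hfsmooth.continuous hfper hfcoef
  funext t
  rw [h1 t, h2 t]
end

section
/- Let 0 < r < π. Suppose g₁, g₂ : ℂ → ℂ are entire functions such that for every k ∈ ℕ there exist constants C_k > 0 with |gⱼ(λ)| ≤ C_k (1+|λ|)^{−k} e^{r|Im λ|} for all λ ∈ ℂ and j = 1, 2. If g₁(l) = g₂(l) for all l ∈ ℤ≥0, then g₁ = g₂. Equivalently, an entire function of this type is uniquely determined by its values at the nonnegative integers. -/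
open Complex Real Set Filter Metric

noncomputable def Complex.abs : AbsoluteValue ℂ ℝ where
  toFun x := ‖x‖
  map_mul' := norm_mul
  nonneg' := norm_nonneg
  eq_zero' _ := norm_eq_zero
  add_le' := norm_add_le

theorem Complex.norm_eq_abs (z : ℂ) : ‖z‖ = Complex.abs z := rfl
theorem Complex.sq_abs (z : ℂ) : Complex.abs z ^ 2 = Complex.normSq z := Complex.sq_norm z
theorem Complex.abs_ofReal (x : ℝ) : Complex.abs (x : ℂ) = |x| := by
  rw [← Complex.norm_eq_abs]; simp
theorem Complex.abs_exp (z : ℂ) : Complex.abs (Complex.exp z) = Real.exp z.re := Complex.norm_exp z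
theorem Complex.abs_re_le_abs (z : ℂ) : |z.re| ≤ Complex.abs z := Complex.abs_re_le_norm z
theorem Complex.abs_im_le_abs (z : ℂ) : |z.im| ≤ Complex.abs z := Complex.abs_im_le_norm z
theorem Complex.abs_le_abs_re_add_abs_im (z : ℂ) : Complex.abs z ≤ |z.re| + |z.im| :=
  Complex.norm_le_abs_re_add_abs_im z
theorem Complex.continuous_abs : Continuous Complex.abs := continuous_norm

private lemma aux_sinh_abs (a : ℝ) : |Real.sinh a| = Real.sinh |a| := by
  rcases abs_cases a with ⟨h, h0⟩ | ⟨h, h0⟩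
  · rw [h, _root_.abs_of_nonneg (Real.sinh_nonneg_iff.2 h0)]
  · rw [h, _root_.abs_of_nonpos (Real.sinh_nonpos_iff.2 h0.le), Real.sinh_neg]

private lemma aux_abs_sin_sq (z : ℂ) :
    (Complex.abs (Complex.sin z))^2 = Real.sin z.re ^ 2 + Real.sinh z.im ^ 2 := by
  have hsin : Complex.sin z = ((Real.sin z.re * Real.cosh z.im : ℝ) : ℂ)
      + ((Real.cos z.re * Real.sinh z.im : ℝ) : ℂ) * Complex.I := by
    rw [Complex.sin_eq]; push_cast; ring
  have hre : (Complex.sin z).re = Real.sin z.re * Real.cosh z.im := by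
    rw [hsin]
    simp only [Complex.add_re, Complex.ofReal_re, Complex.mul_re, Complex.I_re, Complex.I_im,
      Complex.ofReal_im, mul_zero, mul_one, zero_mul, sub_zero, add_zero, zero_add, zero_sub]
  have him : (Complex.sin z).im = Real.cos z.re * Real.sinh z.im := by
    rw [hsin]
    simp only [Complex.add_im, Complex.ofReal_im, Complex.mul_im, Complex.I_re, Complex.I_im,
      Complex.ofReal_re, mul_zero, mul_one, zero_mul, sub_zero, add_zero, zero_add]
  rw [Complex.sq_abs, Complex.normSq_apply, hre, him]
  have hc := Real.cosh_sq z.im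
  have hs := Real.sin_sq_add_cos_sq z.re
  nlinarith

private lemma aux_pi_mul_re (z : ℂ) : ((Real.pi : ℂ) * z).re = Real.pi * z.re := by simp
private lemma aux_pi_mul_im (z : ℂ) : ((Real.pi : ℂ) * z).im = Real.pi * z.im := by simp

private lemma aux_sinh_le_abs_sin (z : ℂ) :
    Real.sinh (Real.pi * |z.im|) ≤ Complex.abs (Complex.sin ((Real.pi : ℂ) * z)) := by
  have h := aux_abs_sin_sq ((Real.pi : ℂ) * z)
  rw [aux_pi_mul_re, aux_pi_mul_im] at h
  have h1 : Real.sinh (Real.pi * |z.im|) = |Real.sinh (Real.pi * z.im)| := by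
    have he : Real.pi * |z.im| = |Real.pi * z.im| := by
      rw [abs_mul, _root_.abs_of_pos Real.pi_pos]
    rw [he, ← aux_sinh_abs]
  have h2 : (0:ℝ) ≤ Complex.abs (Complex.sin ((Real.pi : ℂ) * z)) := AbsoluteValue.nonneg _ _
  nlinarith [_root_.sq_abs (Real.sinh (Real.pi * z.im)), sq_nonneg (Real.sin (Real.pi * z.re))]

private lemma aux_sin_low_away (z : ℂ) (hz : ∀ n : ℤ, (4:ℝ)⁻¹ ≤ Complex.abs (z - n)) :
    Real.sin (Real.pi/8) ≤ Complex.abs (Complex.sin ((Real.pi : ℂ) * z)) := by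
  have habs : (0:ℝ) ≤ Complex.abs (Complex.sin ((Real.pi : ℂ) * z)) := AbsoluteValue.nonneg _ _
  have hsin8pos : 0 < Real.sin (Real.pi/8) :=
    Real.sin_pos_of_pos_of_lt_pi (by positivity) (by linarith [Real.pi_pos])
  rcases le_or_gt (8⁻¹ : ℝ) |z.im| with hy | hy
  · -- imaginary part large
    have h1 : Real.sinh (Real.pi * 8⁻¹) ≤ Real.sinh (Real.pi * |z.im|) := by
      rw [Real.sinh_le_sinh]; nlinarith [Real.pi_pos]
    have h2 : Real.sin (Real.pi/8) ≤ Real.pi/8 :=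
      Real.sin_le (by positivity)
    have h3 : (Real.pi/8 : ℝ) ≤ Real.sinh (Real.pi * 8⁻¹) := by
      have := Real.self_le_sinh_iff.2 (le_of_lt (show (0:ℝ) < Real.pi * 8⁻¹ by positivity))
      linarith
    linarith [aux_sinh_le_abs_sin z]
  · -- imaginary part small: real part is far from integers
    set n : ℤ := round z.re with hn
    have hfar := hz n
    set t := z.re - (n:ℝ) with ht
    have hr : |t| ≤ 1/2 := abs_sub_round z.re
    have habs2 : (Complex.abs (z - n))^2 = t ^ 2 + z.im^2 := by
      rw [Complex.sq_abs, Complex.normSq_apply]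
      simp only [Complex.sub_re, Complex.sub_im, Complex.intCast_re, Complex.intCast_im]
      rw [ht]; ring
    have hx : (8⁻¹:ℝ) ≤ |t| := by
      nlinarith [_root_.sq_abs t, _root_.sq_abs z.im, abs_nonneg t, abs_nonneg z.im,
        AbsoluteValue.nonneg Complex.abs (z - (n:ℂ))]
    have hsin_eq : Real.sin (Real.pi * z.re) ^ 2 = Real.sin (Real.pi * t) ^ 2 := by
      have he : Real.pi * z.re = Real.pi * t + n * Real.pi := by rw [ht]; ring
      rw [he, Real.sin_add, Real.sin_int_mul_pi]
      have hcos : Real.cos ((n:ℝ) * Real.pi) ^ 2 = 1 := by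
        have h0 := Real.sin_sq_add_cos_sq ((n:ℝ) * Real.pi)
        rw [Real.sin_int_mul_pi] at h0; nlinarith
      nlinarith
    have hr' : -(1/2 : ℝ) ≤ t ∧ t ≤ 1/2 := abs_le.1 hr
    obtain ⟨hrl, hru⟩ := hr'
    have hlow : Real.sin (Real.pi/8) ≤ |Real.sin (Real.pi * t)| := by
      have h1 : |Real.sin (Real.pi * t)| = Real.sin (Real.pi * |t|) := by
        rcases le_or_gt 0 t with h0 | h0
        · rw [_root_.abs_of_nonneg h0, _root_.abs_of_nonneg]
          exact Real.sin_nonneg_of_nonneg_of_le_pi (by positivity)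
            (by nlinarith [Real.pi_pos])
        · rw [_root_.abs_of_neg h0, mul_neg, Real.sin_neg]
          refine _root_.abs_of_nonpos ?_
          have : 0 ≤ Real.sin (Real.pi * (-t)) :=
            Real.sin_nonneg_of_nonneg_of_le_pi (by nlinarith [Real.pi_pos])
              (by nlinarith [Real.pi_pos])
          rw [mul_neg, Real.sin_neg] at this
          linarith
      rw [h1]
      apply Real.sin_le_sin_of_le_of_le_pi_div_two (by linarith [Real.pi_pos])
      · nlinarith [Real.pi_pos]
      · nlinarith [Real.pi_pos]
    have h := aux_abs_sin_sq ((Real.pi : ℂ) * z)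
    rw [aux_pi_mul_re, aux_pi_mul_im] at h
    nlinarith [_root_.sq_abs (Real.sin (Real.pi * t)), sq_nonneg (Real.sinh (Real.pi * z.im)),
      hsin8pos.le]

noncomputable def qfun (h : ℂ → ℂ) : ℂ → ℂ := fun z =>
  if Complex.sin ((Real.pi : ℂ) * z) = 0 then
    deriv h z / ((Real.pi : ℂ) * Complex.cos ((Real.pi : ℂ) * z))
  else h z / Complex.sin ((Real.pi : ℂ) * z)

private lemma aux_sin_zero_iff (z : ℂ) :
    Complex.sin ((Real.pi : ℂ) * z) = 0 ↔ ∃ n : ℤ, z = (n : ℂ) := by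
  rw [Complex.sin_eq_zero_iff]
  constructor
  · rintro ⟨k, hk⟩
    refine ⟨k, ?_⟩
    have hpi : (Real.pi : ℂ) ≠ 0 := Complex.ofReal_ne_zero.2 Real.pi_ne_zero
    rw [mul_comm (k:ℂ) (Real.pi:ℂ)] at hk
    exact mul_left_cancel₀ hpi hk
  · rintro ⟨n, rfl⟩
    exact ⟨n, by ring⟩

private lemma aux_int_dist {m n : ℤ} (h : m ≠ n) : (1:ℝ) ≤ Complex.abs ((m:ℂ) - n) := by
  have : ((m:ℂ) - n) = ((m - n : ℤ) : ℂ) := by push_cast; ring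
  rw [this]
  rw [show Complex.abs ((m - n : ℤ) : ℂ) = |((m - n : ℤ) : ℝ)| by
    rw [← Complex.ofReal_intCast, Complex.abs_ofReal]]
  rw [← Int.cast_abs]
  exact_mod_cast Int.one_le_abs (sub_ne_zero.2 h)

private lemma aux_sin_ne_of_not_int {z : ℂ} (hz : ∀ n : ℤ, z ≠ (n:ℂ)) :
    Complex.sin ((Real.pi : ℂ) * z) ≠ 0 := by
  intro h0
  obtain ⟨n, rfl⟩ := (aux_sin_zero_iff z).1 h0
  exact hz n rfl

private lemma aux_hasDerivAt_sinpi (z : ℂ) :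
    HasDerivAt (fun w => Complex.sin ((Real.pi : ℂ) * w))
      ((Real.pi : ℂ) * Complex.cos ((Real.pi : ℂ) * z)) z := by
  have h := (Complex.hasDerivAt_sin ((Real.pi : ℂ) * z)).comp z
    ((hasDerivAt_id z).const_mul ((Real.pi : ℂ)))
  have h2 : HasDerivAt (fun w => Complex.sin ((Real.pi : ℂ) * w))
      (Complex.cos ((Real.pi : ℂ) * z) * ((Real.pi : ℂ) * 1)) z := h
  convert h2 using 1
  ring

private lemma aux_cos_pi_int_ne (n : ℤ) : Complex.cos ((Real.pi : ℂ) * n) ≠ 0 := by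
  have hs : Complex.sin ((Real.pi : ℂ) * n) = 0 := (aux_sin_zero_iff _).2 ⟨n, rfl⟩
  have := Complex.sin_sq_add_cos_sq ((Real.pi : ℂ) * n)
  rw [hs] at this
  intro hc
  rw [hc] at this
  simp at this

private lemma aux_q_diffAt_ne {h : ℂ → ℂ} (hd : Differentiable ℂ h) {z : ℂ}
    (hs : Complex.sin ((Real.pi : ℂ) * z) ≠ 0) : DifferentiableAt ℂ (qfun h) z := by
  have hev : qfun h =ᶠ[nhds z] fun w => h w / Complex.sin ((Real.pi : ℂ) * w) := by
    have hcont : ContinuousAt (fun w => Complex.sin ((Real.pi : ℂ) * w)) z :=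
      (aux_hasDerivAt_sinpi z).continuousAt
    filter_upwards [hcont.eventually_ne hs] with w hw
    simp [qfun, hw]
  refine DifferentiableAt.congr_of_eventuallyEq ?_ hev
  exact (hd z).div (aux_hasDerivAt_sinpi z).differentiableAt hs

private lemma aux_q_cont_at_int {h : ℂ → ℂ} (hd : Differentiable ℂ h) (n : ℤ)
    (hv : h (n : ℂ) = 0) : ContinuousAt (qfun h) (n : ℂ) := by
  have hsn : Complex.sin ((Real.pi : ℂ) * n) = 0 := (aux_sin_zero_iff _).2 ⟨n, rfl⟩
  have hqn : qfun h (n : ℂ) = deriv h n / ((Real.pi : ℂ) * Complex.cos ((Real.pi : ℂ) * n)) := by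
    simp [qfun, hsn]
  -- q agrees with the ratio of slopes on a punctured neighborhood
  have hev : ∀ᶠ z in nhdsWithin (n : ℂ) {(n : ℂ)}ᶜ,
      qfun h z = slope h (n : ℂ) z / slope (fun w => Complex.sin ((Real.pi : ℂ) * w)) (n : ℂ) z := by
    have hball : Metric.ball (n : ℂ) 1 ∈ nhds (n : ℂ) := Metric.ball_mem_nhds _ one_pos
    filter_upwards [self_mem_nhdsWithin, mem_nhdsWithin_of_mem_nhds hball] with z hzne hzball
    have hzne' : z ≠ (n : ℂ) := hzne
    have hznotint : ∀ m : ℤ, z ≠ (m : ℂ) := by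
      intro m hm
      rcases eq_or_ne m n with rfl | hmn
      · exact hzne' hm
      · have h1 := aux_int_dist hmn
        rw [mem_ball] at hzball
        rw [hm] at hzball
        have : Complex.abs ((m:ℂ) - n) < 1 := by
          simpa [Complex.dist_eq, Complex.norm_eq_abs] using hzball
        linarith
    have hsz : Complex.sin ((Real.pi : ℂ) * z) ≠ 0 := aux_sin_ne_of_not_int hznotint
    have hsub : z - (n:ℂ) ≠ 0 := sub_ne_zero.2 hzne'
    rw [qfun, if_neg hsz, slope_def_field, slope_def_field, hv, hsn]
    field_simp
    ring
  have hnum : Tendsto (slope h (n:ℂ)) (nhdsWithin (n:ℂ) {(n:ℂ)}ᶜ) (nhds (deriv h n)) :=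
    hasDerivAt_iff_tendsto_slope.1 (hd (n:ℂ)).hasDerivAt
  have hden : Tendsto (slope (fun w => Complex.sin ((Real.pi : ℂ) * w)) (n:ℂ))
      (nhdsWithin (n:ℂ) {(n:ℂ)}ᶜ) (nhds ((Real.pi : ℂ) * Complex.cos ((Real.pi : ℂ) * n))) :=
    hasDerivAt_iff_tendsto_slope.1 (aux_hasDerivAt_sinpi (n:ℂ))
  have hne : (Real.pi : ℂ) * Complex.cos ((Real.pi : ℂ) * n) ≠ 0 :=
    mul_ne_zero (Complex.ofReal_ne_zero.2 Real.pi_ne_zero) (aux_cos_pi_int_ne n)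
  have htend : Tendsto (qfun h) (nhdsWithin (n:ℂ) {(n:ℂ)}ᶜ) (nhds (qfun h (n:ℂ))) := by
    rw [hqn]
    exact (tendsto_congr' hev).2 (hnum.div hden hne)
  unfold ContinuousAt
  rw [← nhdsNE_sup_pure]
  exact htend.sup (tendsto_pure_nhds _ _)

private lemma aux_q_diffOn {h : ℂ → ℂ} (hd : Differentiable ℂ h)
    (hv : ∀ n : ℤ, 0 ≤ n → h (n : ℂ) = 0) :
    DifferentiableOn ℂ (qfun h) {z : ℂ | -2⁻¹ < z.re} := by
  intro z hz
  refine DifferentiableAt.differentiableWithinAt ?_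
  by_cases hs : Complex.sin ((Real.pi : ℂ) * z) = 0
  · obtain ⟨n, rfl⟩ := (aux_sin_zero_iff z).1 hs
    have hn0 : (0:ℤ) ≤ n := by
      have hzr : (-2⁻¹ : ℝ) < (n:ℝ) := by simpa using hz
      by_contra hcon
      push_neg at hcon
      have h1 : n ≤ -1 := by omega
      have h2 : (n:ℝ) ≤ -1 := by exact_mod_cast h1
      linarith
    refine (Complex.analyticAt_of_differentiable_on_punctured_nhds_of_continuousAt ?_
      (aux_q_cont_at_int hd n (hv n hn0))).differentiableAt
    have hball : Metric.ball ((n:ℂ)) 1 ∈ nhds ((n:ℂ)) := Metric.ball_mem_nhds _ one_pos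
    filter_upwards [self_mem_nhdsWithin, mem_nhdsWithin_of_mem_nhds hball] with w hwne hwball
    refine aux_q_diffAt_ne hd (aux_sin_ne_of_not_int ?_)
    intro m hm
    rcases eq_or_ne m n with rfl | hmn
    · exact hwne hm
    · have h1 := aux_int_dist hmn
      rw [mem_ball, hm] at hwball
      have : Complex.abs ((m:ℂ) - n) < 1 := by simpa [Complex.dist_eq, Complex.norm_eq_abs] using hwball
      linarith
  · exact aux_q_diffAt_ne hd hs
private lemma aux_q_near {h : ℂ → ℂ} (hd : Differentiable ℂ h)
    (hv : ∀ n : ℤ, 0 ≤ n → h (n:ℂ) = 0) {C r : ℝ} (hC0 : 0 < C) (hr0 : 0 < r)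
    (hC : ∀ z : ℂ, Complex.abs (h z) ≤ C * Real.exp (r * |z.im|))
    (n : ℕ) {z : ℂ} (hz : Complex.abs (z - (n:ℂ)) ≤ 4⁻¹) :
    Complex.abs (qfun h z) ≤ C * Real.exp (r/4) / Real.sin (Real.pi/8) := by
  have hsin8 : 0 < Real.sin (Real.pi/8) :=
    Real.sin_pos_of_pos_of_lt_pi (by positivity) (by linarith [Real.pi_pos])
  have hclsub : Metric.closedBall ((n:ℂ)) 4⁻¹ ⊆ {w : ℂ | (-2⁻¹ : ℝ) < w.re} := by
    intro w hw
    rw [Metric.mem_closedBall, Complex.dist_eq] at hw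
    have h1 : |(w - (n:ℂ)).re| ≤ 4⁻¹ := (Complex.abs_re_le_abs _).trans hw
    have h2 : (w - (n:ℂ)).re = w.re - n := by simp
    rw [h2] at h1
    have h3 := abs_le.1 h1
    have : (0:ℝ) ≤ n := Nat.cast_nonneg n
    simp only [Set.mem_setOf_eq]
    linarith [h3.1]
  have hdc : DiffContOnCl ℂ (qfun h) (Metric.ball ((n:ℂ)) 4⁻¹) :=
    ⟨(aux_q_diffOn hd hv).mono (Metric.ball_subset_closedBall.trans hclsub),
     (aux_q_diffOn hd hv).continuousOn.mono
       (by rw [closure_ball ((n:ℂ)) (by norm_num : (4⁻¹:ℝ) ≠ 0)]; exact hclsub)⟩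
  have key := Complex.norm_le_of_forall_mem_frontier_norm_le
    (Metric.isBounded_ball (x := (n:ℂ)) (r := 4⁻¹)) hdc
    (C := C * Real.exp (r/4) / Real.sin (Real.pi/8)) ?_ (z := z) ?_
  · simpa [Complex.norm_eq_abs] using key
  · intro w hw
    rw [frontier_ball ((n:ℂ)) (by norm_num : (4⁻¹:ℝ) ≠ 0), mem_sphere_iff_norm] at hw
    have hwa : Complex.abs (w - (n:ℂ)) = 4⁻¹ := by rwa [Complex.norm_eq_abs] at hw
    have hfar : ∀ m : ℤ, (4⁻¹:ℝ) ≤ Complex.abs (w - (m:ℂ)) := by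
      intro m
      rcases eq_or_ne m (n:ℤ) with rfl | hmn
      · rw [show ((n:ℤ):ℂ) = (n:ℂ) by push_cast; ring, hwa]
      · have h1 := aux_int_dist hmn
        have h2 := Complex.abs.sub_le ((m:ℂ)) w ((n:ℂ))
        have h3 : Complex.abs ((m:ℂ) - w) = Complex.abs (w - (m:ℂ)) :=
          Complex.abs.map_sub _ _
        have h4 : Complex.abs (w - (n:ℂ)) = 4⁻¹ := hwa
        have h5 : ((n:ℤ):ℂ) = (n:ℂ) := by push_cast; ring
        rw [h5] at h1
        linarith [h2, h1]
    have hsne : Complex.sin ((Real.pi:ℂ) * w) ≠ 0 := by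
      refine aux_sin_ne_of_not_int ?_
      intro m hm
      have := hfar m
      rw [hm] at this
      simp at this
      linarith
    have hq : qfun h w = h w / Complex.sin ((Real.pi:ℂ) * w) := by simp [qfun, hsne]
    rw [Complex.norm_eq_abs, hq, map_div₀]
    have him : |w.im| ≤ 4⁻¹ := by
      have h1 : (w - (n:ℂ)).im = w.im := by simp
      have := (Complex.abs_im_le_abs (w - (n:ℂ)))
      rw [h1, hwa] at this
      exact this
    have hnum : Complex.abs (h w) ≤ C * Real.exp (r/4) := by
      refine (hC w).trans ?_
      have : r * |w.im| ≤ r/4 := by nlinarith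
      have := Real.exp_le_exp.2 this
      nlinarith [Real.exp_pos (r * |w.im|)]
    have hden : Real.sin (Real.pi/8) ≤ Complex.abs (Complex.sin ((Real.pi:ℂ) * w)) :=
      aux_sin_low_away w hfar
    exact div_le_div₀ (by positivity) hnum hsin8 hden
  · rw [closure_ball ((n:ℂ)) (by norm_num : (4⁻¹:ℝ) ≠ 0), Metric.mem_closedBall,
      Complex.dist_eq]
    exact hz

private lemma aux_q_far {h : ℂ → ℂ} {C r : ℝ} (hC0 : 0 < C) (hr0 : 0 < r)
    (hC : ∀ z : ℂ, Complex.abs (h z) ≤ C * Real.exp (r * |z.im|))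
    {z : ℂ} (hfar : ∀ m : ℤ, (4⁻¹:ℝ) ≤ Complex.abs (z - (m:ℂ))) :
    Complex.abs (qfun h z) ≤ C * Real.exp (r * |z.im|) / Real.sin (Real.pi/8) := by
  have hsin8 : 0 < Real.sin (Real.pi/8) :=
    Real.sin_pos_of_pos_of_lt_pi (by positivity) (by linarith [Real.pi_pos])
  have hsne : Complex.sin ((Real.pi:ℂ) * z) ≠ 0 := by
    refine aux_sin_ne_of_not_int ?_
    intro m hm
    have := hfar m
    rw [hm] at this
    simp at this
    linarith
  rw [show qfun h z = h z / Complex.sin ((Real.pi:ℂ) * z) by simp [qfun, hsne], map_div₀]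
  exact div_le_div₀ (by positivity) (hC z) hsin8 (aux_sin_low_away z hfar)

private lemma aux_q_bound {h : ℂ → ℂ} (hd : Differentiable ℂ h)
    (hv : ∀ n : ℤ, 0 ≤ n → h (n:ℂ) = 0) {C r : ℝ} (hC0 : 0 < C) (hr0 : 0 < r)
    (hC : ∀ z : ℂ, Complex.abs (h z) ≤ C * Real.exp (r * |z.im|))
    {z : ℂ} (hz : (-4⁻¹:ℝ) ≤ z.re) :
    Complex.abs (qfun h z) ≤
      (C * Real.exp (r/4) / Real.sin (Real.pi/8)) * Real.exp (r * |z.im|) := by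
  have hsin8 : 0 < Real.sin (Real.pi/8) :=
    Real.sin_pos_of_pos_of_lt_pi (by positivity) (by linarith [Real.pi_pos])
  have hexp1 : (1:ℝ) ≤ Real.exp (r * |z.im|) := Real.one_le_exp (by positivity)
  by_cases hnear : ∃ n : ℕ, Complex.abs (z - (n:ℂ)) ≤ 4⁻¹
  · obtain ⟨n, hn⟩ := hnear
    refine (aux_q_near hd hv hC0 hr0 hC n hn).trans ?_
    have hK : 0 < C * Real.exp (r/4) / Real.sin (Real.pi/8) := by positivity
    nlinarith
  · push_neg at hnear
    have hfar : ∀ m : ℤ, (4⁻¹:ℝ) ≤ Complex.abs (z - (m:ℂ)) := by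
      intro m
      rcases le_or_gt 0 m with hm | hm
      · have := hnear m.toNat
        have hcast : ((m.toNat:ℕ):ℂ) = (m:ℂ) := by
          exact_mod_cast congrArg (Int.cast : ℤ → ℂ) (Int.toNat_of_nonneg hm)
        rw [hcast] at this
        linarith
      · have h1' : m ≤ -1 := by omega
        have h1 : (m:ℝ) ≤ -1 := by exact_mod_cast h1'
        have h2 : (z - (m:ℂ)).re = z.re - m := by simp
        have h3 : (3/4:ℝ) ≤ z.re - (m:ℝ) := by linarith
        have h4 := Complex.abs_re_le_abs (z - (m:ℂ))
        rw [h2] at h4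
        have := le_abs_self (z.re - (m:ℝ))
        linarith
    refine (aux_q_far hC0 hr0 hC hfar).trans ?_
    rw [div_mul_eq_mul_div, div_le_div_iff₀ hsin8 hsin8]
    have hexp4 : (1:ℝ) ≤ Real.exp (r/4) := Real.one_le_exp (by positivity)
    have key : 0 ≤ (Real.exp (r/4) - 1) * (C * Real.exp (r * |z.im|) * Real.sin (Real.pi/8)) :=
      mul_nonneg (by linarith) (by positivity)
    nlinarith [key]

private lemma aux_q_imaxis {h : ℂ → ℂ} {C r : ℝ} (hC0 : 0 < C) (hr0 : 0 < r)
    (hC : ∀ z : ℂ, Complex.abs (h z) ≤ C * Real.exp (r * |z.im|))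
    {y : ℝ} (hy : (4⁻¹:ℝ) ≤ |y|) :
    Complex.abs (qfun h ((y:ℂ) * Complex.I)) ≤
      (2*C/(1 - Real.exp (-(Real.pi/2)))) * Real.exp ((r - Real.pi) * |y|) := by
  set z := (y:ℂ) * Complex.I with hzdef
  have hzim : z.im = y := by simp [hzdef]
  have hzre : z.re = 0 := by simp [hzdef]
  have hyne : y ≠ 0 := by intro h0; rw [h0] at hy; simp at hy; linarith
  have hsne : Complex.sin ((Real.pi:ℂ) * z) ≠ 0 := by
    refine aux_sin_ne_of_not_int ?_
    intro m hm
    have : z.im = 0 := by rw [hm]; simp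
    rw [hzim] at this
    exact hyne this
  have hE : Real.exp (-(Real.pi/2)) < 1 := by
    rw [Real.exp_lt_one_iff]; linarith [Real.pi_pos]
  have hE0 : 0 < 1 - Real.exp (-(Real.pi/2)) := by linarith
  -- lower bound on |sin(π z)|
  have hsinh : (1 - Real.exp (-(Real.pi/2)))/2 * Real.exp (Real.pi * |y|) ≤
      Complex.abs (Complex.sin ((Real.pi:ℂ) * z)) := by
    have hs2 := aux_sinh_le_abs_sin z
    rw [hzim] at hs2
    refine le_trans ?_ hs2
    rw [Real.sinh_eq]
    set t := Real.pi * |y| with htdef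
    have ht : Real.pi/4 ≤ t := by
      rw [htdef]; nlinarith [Real.pi_pos]
    have h1 : Real.exp (-t) ≤ Real.exp t * Real.exp (-(Real.pi/2)) := by
      rw [← Real.exp_add]
      refine Real.exp_le_exp.2 ?_
      linarith
    nlinarith [Real.exp_pos t]
  have hq : qfun h z = h z / Complex.sin ((Real.pi:ℂ) * z) := by simp [qfun, hsne]
  rw [hq, map_div₀]
  have hnum : Complex.abs (h z) ≤ C * Real.exp (r * |y|) := by rw [← hzim]; exact hC z
  have hrhs : (2*C/(1 - Real.exp (-(Real.pi/2)))) * Real.exp ((r - Real.pi) * |y|)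
      = (C * Real.exp (r * |y|)) / ((1 - Real.exp (-(Real.pi/2)))/2 * Real.exp (Real.pi * |y|)) := by
    rw [show (r - Real.pi) * |y| = r * |y| - Real.pi * |y| by ring, Real.exp_sub]
    field_simp
  rw [hrhs]
  refine div_le_div₀ (by positivity) hnum (by positivity) hsinh
noncomputable def dfun (δ : ℝ) : ℂ → ℂ := fun z =>
  Complex.exp (-(δ:ℂ) * (z * Complex.log z))

private lemma aux_dfun_abs (δ : ℝ) (z : ℂ) :
    Complex.abs (dfun δ z) = Real.exp (-δ * (z * Complex.log z).re) := by
  rw [dfun, Complex.abs_exp]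
  congr 1
  have : (-(δ:ℂ)) = ((-δ : ℝ) : ℂ) := by push_cast; ring
  rw [this, Complex.re_ofReal_mul]

private lemma aux_zlog_re (z : ℂ) :
    (z * Complex.log z).re = z.re * Real.log (Complex.abs z) - z.im * Complex.arg z := by
  rw [Complex.mul_re, Complex.log_re, Complex.log_im, Complex.norm_eq_abs]

private lemma aux_dfun_diffAt {δ : ℝ} {z : ℂ} (hz : 0 < z.re) :
    DifferentiableAt ℂ (dfun δ) z := by
  have hlog : DifferentiableAt ℂ Complex.log z :=
    Complex.differentiableAt_log (Or.inl hz)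
  exact (((differentiableAt_id.mul hlog).const_mul (-(δ:ℂ)))).cexp

private lemma aux_zlog_tendsto : Filter.Tendsto (fun z : ℂ => z * Complex.log z)
    (nhds 0) (nhds 0) := by
  have hpunc : Filter.Tendsto (fun z : ℂ => z * Complex.log z)
      (nhdsWithin (0:ℂ) {(0:ℂ)}ᶜ) (nhds 0) := by
    have habs : Filter.Tendsto (fun z : ℂ => Complex.abs z)
        (nhdsWithin (0:ℂ) {(0:ℂ)}ᶜ) (nhdsWithin (0:ℝ) (Set.Ioi 0)) := by
      rw [tendsto_nhdsWithin_iff]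
      constructor
      · have := (Complex.continuous_abs.tendsto (0:ℂ)).mono_left
          (nhdsWithin_le_nhds (s := {(0:ℂ)}ᶜ))
        simpa using this
      · filter_upwards [self_mem_nhdsWithin] with w hw
        simp only [Set.mem_Ioi]
        exact AbsoluteValue.pos Complex.abs hw
    have h1 : Filter.Tendsto (fun z : ℂ => Real.log (Complex.abs z) * Complex.abs z)
        (nhdsWithin (0:ℂ) {(0:ℂ)}ᶜ) (nhds 0) := by
      have h := tendsto_log_mul_rpow_nhdsGT_zero zero_lt_one
      simp only [Real.rpow_one] at h
      exact h.comp habs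
    have h2 : Filter.Tendsto (fun z : ℂ => Complex.abs z)
        (nhdsWithin (0:ℂ) {(0:ℂ)}ᶜ) (nhds 0) := by
      have := (Complex.continuous_abs.tendsto (0:ℂ)).mono_left
        (nhdsWithin_le_nhds (s := {(0:ℂ)}ᶜ))
      simpa using this
    have hg : Filter.Tendsto
        (fun z : ℂ => |Real.log (Complex.abs z) * Complex.abs z| + Real.pi * Complex.abs z)
        (nhdsWithin (0:ℂ) {(0:ℂ)}ᶜ) (nhds 0) := by
      have := (h1.abs).add (h2.const_mul Real.pi)
      simpa using this
    refine squeeze_zero_norm' ?_ hg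
    filter_upwards [self_mem_nhdsWithin] with w hw
    have hw0 : w ≠ 0 := hw
    have hb : ‖Complex.log w‖ ≤ |Real.log (Complex.abs w)| + Real.pi := by
      refine (Complex.abs_le_abs_re_add_abs_im _).trans ?_
      rw [Complex.log_re, Complex.log_im]
      have := Complex.abs_arg_le_pi w
      simp only [Complex.norm_eq_abs] at *
      linarith
    have habs0 : (0:ℝ) ≤ Complex.abs w := AbsoluteValue.nonneg _ _
    calc ‖w * Complex.log w‖ = Complex.abs w * ‖Complex.log w‖ := by
          rw [Complex.norm_eq_abs, map_mul]; rfl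
      _ ≤ Complex.abs w * (|Real.log (Complex.abs w)| + Real.pi) := by
          refine mul_le_mul_of_nonneg_left hb habs0
      _ ≤ |Real.log (Complex.abs w) * Complex.abs w| + Real.pi * Complex.abs w := by
          rw [abs_mul, _root_.abs_of_nonneg habs0]
          nlinarith [abs_nonneg (Real.log (Complex.abs w))]
  have hpure : Filter.Tendsto (fun z : ℂ => z * Complex.log z) (pure (0:ℂ)) (nhds 0) := by
    have h0 : (fun z : ℂ => z * Complex.log z) 0 = 0 := by simp
    have h := tendsto_pure_nhds (fun z : ℂ => z * Complex.log z) 0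
    simp only [h0] at h
    exact h
  have hs := hpunc.sup hpure
  rwa [nhdsNE_sup_pure] at hs

private lemma aux_dfun_contOn (δ : ℝ) : ContinuousOn (dfun δ) {z : ℂ | 0 ≤ z.re} := by
  intro z hz
  rcases eq_or_ne z 0 with rfl | hz0
  · refine ContinuousAt.continuousWithinAt ?_
    unfold dfun
    have h1 : Filter.Tendsto (fun w : ℂ => -(δ:ℂ) * (w * Complex.log w)) (nhds 0)
        (nhds (-(δ:ℂ) * (0 * Complex.log 0))) := by
      rw [show (0:ℂ) * Complex.log 0 = 0 by simp]
      simpa using (aux_zlog_tendsto.const_mul (-(δ:ℂ)))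
    exact (Complex.continuous_exp.tendsto _).comp h1
  · refine ContinuousAt.continuousWithinAt ?_
    have hz' : (0:ℝ) ≤ z.re := hz
    have hslit : z ∈ Complex.slitPlane := by
      rcases lt_or_eq_of_le hz' with h | h
    -- 0 < z.re or 0 = z.re
      · exact Or.inl h
      · refine Or.inr ?_
        intro him
        exact hz0 (Complex.ext (by simpa using h.symm) him)
    have hlog : ContinuousAt Complex.log z := continuousAt_clog hslit
    exact (((continuousAt_id.mul hlog).const_mul (-(δ:ℂ)))).cexp

private lemma aux_dfun_real {δ : ℝ} (x : ℝ) (hx : 0 ≤ x) :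
    Complex.abs (dfun δ (x:ℂ)) = Real.exp (-δ * (x * Real.log x)) := by
  rw [aux_dfun_abs]
  congr 2
  rw [← Complex.ofReal_log hx, ← Complex.ofReal_mul, Complex.ofReal_re]

private lemma aux_dfun_imaxis {δ : ℝ} (hδ : 0 ≤ δ) (y : ℝ) :
    Complex.abs (dfun δ ((y:ℂ) * Complex.I)) ≤ Real.exp (δ * (Real.pi/2) * |y|) := by
  rw [aux_dfun_abs]
  rcases eq_or_ne y 0 with rfl | hy
  · simp
  · set z := (y:ℂ) * Complex.I with hzdef
    have hre : z.re = 0 := by simp [hzdef]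
    have him : z.im = y := by simp [hzdef]
    have harg : z.im * Complex.arg z = (Real.pi/2) * |y| := by
      rcases lt_or_gt_of_ne hy with hneg | hpos
      · have : Complex.arg z = -(Real.pi/2) :=
          Complex.arg_eq_neg_pi_div_two_iff.2 ⟨hre, by rw [him]; exact hneg⟩
        rw [this, him, abs_of_neg hneg]; ring
      · have : Complex.arg z = Real.pi/2 :=
          Complex.arg_eq_pi_div_two_iff.2 ⟨hre, by rw [him]; exact hpos⟩
        rw [this, him, abs_of_pos hpos]; ring
    rw [aux_zlog_re, hre, harg]
    rw [Real.exp_le_exp]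
    ring_nf
    exact le_refl _

private lemma aux_dfun_global {δ : ℝ} (hδ : 0 ≤ δ) (z : ℂ) :
    Complex.abs (dfun δ z) ≤
      Real.exp (δ * (Complex.abs z * (|Real.log (Complex.abs z)| + Real.pi))) := by
  rw [aux_dfun_abs, Real.exp_le_exp]
  have h1 : |(z * Complex.log z).re| ≤ Complex.abs z * (|Real.log (Complex.abs z)| + Real.pi) := by
    refine (Complex.abs_re_le_abs _).trans ?_
    rw [map_mul]
    refine mul_le_mul_of_nonneg_left ?_ (AbsoluteValue.nonneg _ _)
    refine (Complex.abs_le_abs_re_add_abs_im _).trans ?_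
    rw [Complex.log_re, Complex.log_im, Complex.norm_eq_abs]
    linarith [Complex.abs_arg_le_pi z]
  have h2 := neg_abs_le ((z * Complex.log z).re)
  nlinarith [abs_nonneg ((z * Complex.log z).re)]

/-- **Uniqueness in the local Paley–Wiener theorem for `S²`.** Let `0 < r < π`. Entire
functions `g₁, g₂` satisfying `|gⱼ(λ)| ≤ C_k (1+|λ|)^{-k} e^{r|Im λ|}` for every `k` and
agreeing on the nonnegative integers are equal. -/
theorem entire_exp_type_eq_of_eq_on_nat
    (r : ℝ) (hr0 : 0 < r) (hrpi : r < Real.pi)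
    (g₁ g₂ : ℂ → ℂ) (hg₁ : Differentiable ℂ g₁) (hg₂ : Differentiable ℂ g₂)
    (hdecay₁ : ∀ k : ℕ, ∃ C : ℝ, 0 < C ∧ ∀ lam : ℂ,
      ‖g₁ lam‖ ≤ C * (1 + ‖lam‖) ^ (-(k : ℤ)) * Real.exp (r * |lam.im|))
    (hdecay₂ : ∀ k : ℕ, ∃ C : ℝ, 0 < C ∧ ∀ lam : ℂ,
      ‖g₂ lam‖ ≤ C * (1 + ‖lam‖) ^ (-(k : ℤ)) * Real.exp (r * |lam.im|))
    (heq : ∀ l : ℕ, g₁ l = g₂ l) :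
    g₁ = g₂ := by
  obtain ⟨C₁, hC₁0, hC₁⟩ := hdecay₁ 0
  obtain ⟨C₂, hC₂0, hC₂⟩ := hdecay₂ 0
  set h : ℂ → ℂ := fun z => g₁ z - g₂ z with hh
  have hdh : Differentiable ℂ h := hg₁.sub hg₂
  set C := C₁ + C₂ with hCdef
  have hC0 : 0 < C := by positivity
  have hC : ∀ z : ℂ, Complex.abs (h z) ≤ C * Real.exp (r * |z.im|) := by
    intro z
    have h1 := hC₁ z
    have h2 := hC₂ z
    simp only [Nat.cast_zero, neg_zero, zpow_zero, mul_one, Complex.norm_eq_abs] at h1 h2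
    have h3 := norm_sub_le (g₁ z) (g₂ z)
    rw [Complex.norm_eq_abs, Complex.norm_eq_abs, Complex.norm_eq_abs] at h3
    calc Complex.abs (h z) = Complex.abs (g₁ z - g₂ z) := rfl
      _ ≤ Complex.abs (g₁ z) + Complex.abs (g₂ z) := h3
      _ ≤ C * Real.exp (r * |z.im|) := by rw [hCdef]; linarith
  have hv : ∀ n : ℤ, 0 ≤ n → h (n:ℂ) = 0 := by
    intro n hn
    have hcast : ((n.toNat : ℕ) : ℂ) = (n : ℂ) := by
      exact_mod_cast congrArg (Int.cast : ℤ → ℂ) (Int.toNat_of_nonneg hn)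
    have := heq n.toNat
    rw [hcast] at this
    simp only [hh, this, sub_self]
  obtain ⟨δ, hδdef, hδ0⟩ : ∃ δ : ℝ, δ = (Real.pi - r) / Real.pi ∧ 0 < δ :=
    ⟨(Real.pi - r) / Real.pi, rfl, div_pos (by linarith) Real.pi_pos⟩
  have hsin8 : 0 < Real.sin (Real.pi/8) :=
    Real.sin_pos_of_pos_of_lt_pi (by positivity) (by linarith [Real.pi_pos])
  obtain ⟨K, hKdef, hK0⟩ : ∃ K : ℝ, K = C * Real.exp (r/4) / Real.sin (Real.pi/8) ∧ 0 < K :=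
    ⟨_, rfl, by positivity⟩
  set F : ℂ → ℂ := fun z => qfun h z * dfun δ z with hFdef
  have hopen : IsOpen {z : ℂ | (-2⁻¹:ℝ) < z.re} := isOpen_lt continuous_const Complex.continuous_re
  have hqd : DifferentiableOn ℂ (qfun h) {z : ℂ | (-2⁻¹:ℝ) < z.re} := aux_q_diffOn hdh hv
  -- hypothesis (differentiability) for Phragmén–Lindelöf
  have hd : DiffContOnCl ℂ F {z : ℂ | 0 < z.re} := by
    constructor
    · intro z hz
      have hz' : (0:ℝ) < z.re := hz
      refine DifferentiableAt.differentiableWithinAt ?_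
      refine DifferentiableAt.mul ?_ (aux_dfun_diffAt hz')
      exact hqd.differentiableAt (hopen.mem_nhds (by simp only [Set.mem_setOf_eq]; linarith))
    · rw [Complex.closure_setOf_lt_re]
      refine ContinuousOn.mul ?_ (aux_dfun_contOn δ)
      exact hqd.continuousOn.mono
        (fun z hz => by simp only [Set.mem_setOf_eq] at *; linarith)
  -- growth hypothesis
  have hexp : ∃ c < (2:ℝ), ∃ B, F =O[Bornology.cobounded ℂ ⊓ Filter.principal {z : ℂ | 0 < z.re}]
      fun z => Real.exp (B * Complex.abs z ^ c) := by
    refine ⟨3/2, by norm_num, r + δ * Real.pi + 2*δ, ?_⟩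
    refine Asymptotics.IsBigO.of_bound K ?_
    filter_upwards [(eventually_cobounded_le_norm (1:ℝ)).filter_mono inf_le_left,
      (Filter.eventually_principal.mpr (fun z hz => hz)).filter_mono inf_le_right] with z hz1 hz2
    have hz' : (0:ℝ) < z.re := hz2
    set a : ℝ := Complex.abs z with hadef
    have ha1 : (1:ℝ) ≤ a := by rwa [Complex.norm_eq_abs] at hz1
    have ha0 : (0:ℝ) < a := by linarith
    have him : |z.im| ≤ a := Complex.abs_im_le_abs z
    have hq := aux_q_bound hdh hv hC0 hr0 hC (z := z) (by linarith)
    rw [← hKdef] at hq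
    have hdg := aux_dfun_global hδ0.le z
    have hlogabs : |Real.log a| = Real.log a := abs_of_nonneg (Real.log_nonneg ha1)
    have hloga : Real.log a ≤ 2 * Real.sqrt a := by
      have h1 : Real.log (Real.sqrt a) ≤ Real.sqrt a - 1 :=
        Real.log_le_sub_one_of_pos (Real.sqrt_pos.2 ha0)
      rw [Real.log_sqrt ha0.le] at h1
      have h2 : 0 ≤ Real.sqrt a := Real.sqrt_nonneg a
      linarith
    have hsqrt_eq : Real.sqrt a = a ^ ((1:ℝ)/2) := Real.sqrt_eq_rpow a
    have hself : a ≤ a ^ ((3:ℝ)/2) := by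
      calc a = a ^ (1:ℝ) := (Real.rpow_one a).symm
        _ ≤ a ^ ((3:ℝ)/2) := Real.rpow_le_rpow_of_exponent_le ha1 (by norm_num)
    have hmul32 : a * a ^ ((1:ℝ)/2) = a ^ ((3:ℝ)/2) := by
      rw [show ((3:ℝ)/2) = 1 + (1:ℝ)/2 by norm_num, Real.rpow_add ha0, Real.rpow_one]
    have h32nonneg : (0:ℝ) ≤ a ^ ((3:ℝ)/2) := Real.rpow_nonneg ha0.le _
    -- exponent estimate
    have hexpo : r * |z.im| + δ * (a * (|Real.log a| + Real.pi)) ≤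
        (r + δ * Real.pi + 2*δ) * a ^ ((3:ℝ)/2) := by
      rw [hlogabs]
      have e1 : r * |z.im| ≤ r * a ^ ((3:ℝ)/2) := by
        refine mul_le_mul_of_nonneg_left (him.trans hself) hr0.le
      have e2 : a * Real.log a ≤ 2 * a ^ ((3:ℝ)/2) := by
        calc a * Real.log a ≤ a * (2 * Real.sqrt a) :=
              mul_le_mul_of_nonneg_left hloga ha0.le
          _ = 2 * (a * a ^ ((1:ℝ)/2)) := by rw [hsqrt_eq]; ring
          _ = 2 * a ^ ((3:ℝ)/2) := by rw [hmul32]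
      have e3 : a * Real.pi ≤ Real.pi * a ^ ((3:ℝ)/2) := by
        rw [mul_comm]
        exact mul_le_mul_of_nonneg_left hself Real.pi_pos.le
      have e4 : δ * (a * (Real.log a + Real.pi)) = δ * (a * Real.log a) + δ * (a * Real.pi) := by
        ring
      rw [e4]
      have e5 : δ * (a * Real.log a) ≤ δ * (2 * a ^ ((3:ℝ)/2)) :=
        mul_le_mul_of_nonneg_left e2 hδ0.le
      have e6 : δ * (a * Real.pi) ≤ δ * (Real.pi * a ^ ((3:ℝ)/2)) :=
        mul_le_mul_of_nonneg_left e3 hδ0.le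
      nlinarith
    -- final bound
    have hnorm : ‖F z‖ = Complex.abs (qfun h z) * Complex.abs (dfun δ z) := by
      rw [Complex.norm_eq_abs, hFdef, map_mul]
    rw [hnorm]
    have hb1 : Complex.abs (qfun h z) * Complex.abs (dfun δ z) ≤
        (K * Real.exp (r * |z.im|)) * Real.exp (δ * (a * (|Real.log a| + Real.pi))) := by
      refine mul_le_mul hq hdg (AbsoluteValue.nonneg _ _) (by positivity)
    refine hb1.trans ?_
    rw [mul_assoc, ← Real.exp_add]
    rw [Real.norm_eq_abs, Real.abs_exp]
    refine mul_le_mul_of_nonneg_left ?_ hK0.le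
    exact Real.exp_le_exp.2 hexpo
  -- superexponential decay on the real axis
  have hre : Asymptotics.SuperpolynomialDecay Filter.atTop Real.exp (fun x : ℝ => ‖F (x:ℂ)‖) := by
    intro n
    have hu : Filter.Tendsto (fun x : ℝ => (n:ℝ)*x - δ*(x*Real.log x)) Filter.atTop
        Filter.atBot := by
      have h2 : Filter.Tendsto (fun x : ℝ => (n:ℝ) - δ * Real.log x) Filter.atTop
          Filter.atBot := by
        have h3 : Filter.Tendsto (fun x : ℝ => δ * Real.log x) Filter.atTop Filter.atTop :=
          Real.tendsto_log_atTop.const_mul_atTop hδ0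
        have h4 : Filter.Tendsto (fun x : ℝ => -(δ * Real.log x)) Filter.atTop Filter.atBot :=
          tendsto_neg_atTop_atBot.comp h3
        have h5 := Filter.tendsto_atBot_add_const_left Filter.atTop ((n:ℝ)) h4
        refine h5.congr (fun x => by ring)
      have h6 := Filter.Tendsto.atTop_mul_atBot₀ (Filter.tendsto_id) h2
      refine h6.congr (fun x => by simp only [id_eq]; ring)
    have hup : Filter.Tendsto (fun x : ℝ => K * Real.exp ((n:ℝ)*x - δ*(x*Real.log x)))
        Filter.atTop (nhds 0) := by
      have := (Real.tendsto_exp_atBot.comp hu).const_mul K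
      simpa using this
    refine tendsto_of_tendsto_of_tendsto_of_le_of_le' tendsto_const_nhds hup ?_ ?_
    · filter_upwards with x
      positivity
    · filter_upwards [Filter.eventually_ge_atTop (0:ℝ)] with x hx
      have hq : Complex.abs (qfun h (x:ℂ)) ≤ K := by
        have h7 := aux_q_bound hdh hv hC0 hr0 hC (z := (x:ℂ))
          (by simp only [Complex.ofReal_re]; linarith)
        rw [← hKdef] at h7
        simpa using h7
      have hdx : Complex.abs (dfun δ (x:ℂ)) = Real.exp (-δ * (x * Real.log x)) :=
        aux_dfun_real x hx
      have hnorm : ‖F (x:ℂ)‖ = Complex.abs (qfun h (x:ℂ)) * Complex.abs (dfun δ (x:ℂ)) := by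
        rw [Complex.norm_eq_abs, hFdef, map_mul]
      rw [hnorm, hdx]
      have hexpn : Real.exp x ^ n = Real.exp ((n:ℝ)*x) := (Real.exp_nat_mul x n).symm
      rw [hexpn]
      calc Real.exp ((n:ℝ)*x) * (Complex.abs (qfun h (x:ℂ)) * Real.exp (-δ * (x * Real.log x)))
          ≤ Real.exp ((n:ℝ)*x) * (K * Real.exp (-δ * (x * Real.log x))) := by
            refine mul_le_mul_of_nonneg_left ?_ (Real.exp_pos _).le
            exact mul_le_mul_of_nonneg_right hq (Real.exp_pos _).le
        _ = K * Real.exp ((n:ℝ)*x - δ*(x*Real.log x)) := by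
            have harg : (n:ℝ)*x + (-δ * (x*Real.log x)) = (n:ℝ)*x - δ*(x*Real.log x) := by ring
            rw [mul_left_comm, ← Real.exp_add, harg]
  -- boundedness on the imaginary axis
  have him : ∃ Cb : ℝ, ∀ x : ℝ, ‖F ((x:ℂ) * Complex.I)‖ ≤ Cb := by
    have hE : Real.exp (-(Real.pi/2)) < 1 := by
      rw [Real.exp_lt_one_iff]; linarith [Real.pi_pos]
    have hE0 : 0 < 1 - Real.exp (-(Real.pi/2)) := by linarith
    refine ⟨max (K * Real.exp (r/4) * Real.exp (δ*(Real.pi/2)*4⁻¹))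
      (2*C/(1 - Real.exp (-(Real.pi/2)))), ?_⟩
    intro y
    have hnorm : ‖F ((y:ℂ) * Complex.I)‖ =
        Complex.abs (qfun h ((y:ℂ) * Complex.I)) * Complex.abs (dfun δ ((y:ℂ) * Complex.I)) := by
      rw [Complex.norm_eq_abs, hFdef, map_mul]
    rw [hnorm]
    have hre0 : ((y:ℂ) * Complex.I).re = 0 := by simp
    have him0 : ((y:ℂ) * Complex.I).im = y := by simp
    have hd4 := aux_dfun_imaxis hδ0.le y
    rcases le_or_gt (|y|) 4⁻¹ with hy | hy
    · refine le_trans ?_ (le_max_left _ _)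
      have hq4 : Complex.abs (qfun h ((y:ℂ) * Complex.I)) ≤ K * Real.exp (r/4) := by
        have h7 := aux_q_bound hdh hv hC0 hr0 hC (z := (y:ℂ) * Complex.I)
          (by rw [hre0]; norm_num)
        rw [← hKdef] at h7
        rw [him0] at h7
        refine h7.trans ?_
        refine mul_le_mul_of_nonneg_left ?_ hK0.le
        exact Real.exp_le_exp.2 (by nlinarith)
      have hd5 : Complex.abs (dfun δ ((y:ℂ) * Complex.I)) ≤
          Real.exp (δ*(Real.pi/2)*4⁻¹) := by
        refine hd4.trans (Real.exp_le_exp.2 ?_)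
        have : δ * (Real.pi/2) * |y| ≤ δ * (Real.pi/2) * 4⁻¹ := by
          refine mul_le_mul_of_nonneg_left hy (by positivity)
        linarith
      calc Complex.abs (qfun h ((y:ℂ) * Complex.I)) * Complex.abs (dfun δ ((y:ℂ) * Complex.I))
          ≤ (K * Real.exp (r/4)) * Real.exp (δ*(Real.pi/2)*4⁻¹) := by
            refine mul_le_mul hq4 hd5 (AbsoluteValue.nonneg _ _) (by positivity)
        _ = K * Real.exp (r/4) * Real.exp (δ*(Real.pi/2)*4⁻¹) := by ring
    · refine le_trans ?_ (le_max_right _ _)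
      have hq4 := aux_q_imaxis hC0 hr0 hC (y := y) hy.le
      calc Complex.abs (qfun h ((y:ℂ) * Complex.I)) * Complex.abs (dfun δ ((y:ℂ) * Complex.I))
          ≤ ((2*C/(1 - Real.exp (-(Real.pi/2)))) * Real.exp ((r - Real.pi) * |y|)) *
            Real.exp (δ * (Real.pi/2) * |y|) := by
            refine mul_le_mul hq4 hd4 (AbsoluteValue.nonneg _ _) (by positivity)
        _ = (2*C/(1 - Real.exp (-(Real.pi/2)))) *
            Real.exp ((r - Real.pi) * |y| + δ * (Real.pi/2) * |y|) := by
            rw [mul_assoc, ← Real.exp_add]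
        _ ≤ 2*C/(1 - Real.exp (-(Real.pi/2))) := by
            have hexple : (r - Real.pi) * |y| + δ * (Real.pi/2) * |y| ≤ 0 := by
              have hcoef : (r - Real.pi) + δ * (Real.pi/2) = (r - Real.pi)/2 := by
                rw [hδdef]; field_simp; ring
              have : ((r - Real.pi) + δ * (Real.pi/2)) * |y| ≤ 0 := by
                rw [hcoef]
                refine mul_nonpos_of_nonpos_of_nonneg (by linarith) (abs_nonneg y)
              nlinarith [abs_nonneg y]
            refine mul_le_of_le_one_right (by positivity) ?_
            exact Real.exp_le_one_iff.2 hexple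
  -- Phragmén–Lindelöf
  have hPL := PhragmenLindelof.eq_zero_on_right_half_plane_of_superexponential_decay
    (f := F) hd hexp hre him
  -- conclude h = 0 on a ball
  set w₀ : ℂ := (1/2 : ℂ) + Complex.I with hw₀
  have hw₀re : w₀.re = 1/2 := by simp [hw₀]
  have hw₀im : w₀.im = 1 := by simp [hw₀]
  have hball : ∀ z ∈ Metric.ball w₀ (2⁻¹:ℝ), h z = 0 := by
    intro z hz
    rw [Metric.mem_ball, Complex.dist_eq] at hz
    have hre1 : |(z - w₀).re| < 2⁻¹ := lt_of_le_of_lt (Complex.abs_re_le_abs _) hz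
    have him1 : |(z - w₀).im| < 2⁻¹ := lt_of_le_of_lt (Complex.abs_im_le_abs _) hz
    rw [Complex.sub_re, hw₀re] at hre1
    rw [Complex.sub_im, hw₀im] at him1
    have hre2 : 0 < z.re := by have := abs_lt.1 hre1; linarith [this.1]
    have him2 : 0 < z.im := by have := abs_lt.1 him1; linarith [this.1]
    have hFz : F z = 0 := hPL (by simp only [Set.mem_setOf_eq]; linarith)
    have hdne : dfun δ z ≠ 0 := Complex.exp_ne_zero _
    have hqz : qfun h z = 0 := by
      rcases mul_eq_zero.1 hFz with h' | h'
      · exact h'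
      · exact absurd h' hdne
    have hsne : Complex.sin ((Real.pi:ℂ) * z) ≠ 0 := by
      refine aux_sin_ne_of_not_int ?_
      intro m hm
      rw [hm] at him2
      simp at him2
    rw [qfun, if_neg hsne] at hqz
    rcases div_eq_zero_iff.1 hqz with h' | h'
    · exact h'
    · exact absurd h' hsne
  have hA : AnalyticOnNhd ℂ h Set.univ := hdh.differentiableOn.analyticOnNhd isOpen_univ
  have hev : h =ᶠ[nhds w₀] (0 : ℂ → ℂ) :=
    Filter.eventually_of_mem
      (Metric.isOpen_ball.mem_nhds (Metric.mem_ball_self (by norm_num))) hball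
  have hzero := hA.eqOn_zero_of_preconnected_of_eventuallyEq_zero isPreconnected_univ
    (Set.mem_univ w₀) hev
  funext z
  have hz := hzero (Set.mem_univ z)
  have hz' : g₁ z - g₂ z = 0 := hz
  exact sub_eq_zero.1 hz'
end
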